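/- arXiv:2506.13088 — 7 statements merged into one kernel-verified Lean document; each statement's English description precedes it below -/
import Mathlib

section
/- Let K ≥ 2 and suppose 0 ≤ ε < C₂(K) := 2/(K − 1). If (V^{[1]}, m^{[1]}) and (V^{[2]}, m^{[2]}) are two solutions of the HJB–Kolmogorov system (with the same data K, T, r, ε, M) such that m^{[1]}_k(t) > 0 and m^{[2]}_k(t) > 0 for every k ∈ {1,…,K} and every t ∈ (0,T], then V^{[1]}_k = V^{[2]}_k on [0,T] for every k ∈ {1,…,K} and m^{[1]}_k = m^{[2]}_k on [0,T] for every k ∈ {0,…,K}; that is, the solution is unique. -/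
noncomputable section

/-- The proportion of active firms: `η(t) = ∑_{k=1}^K m_k(t)`. -/
def marketEta (K : ℕ) (m : ℕ → ℝ → ℝ) (t : ℝ) : ℝ := ∑ k ∈ Finset.Icc 1 K, m k t

/-- The interaction functional
`φ(t) = (∑_{k=1}^K m_k(t)·ΔV_k(t) − η(t)) / (2 + ε·η(t))`, where `ΔV_k = V_k − V_{k−1}`. -/
def marketPhi (K : ℕ) (ε : ℝ) (V m : ℕ → ℝ → ℝ) (t : ℝ) : ℝ :=
  ((∑ k ∈ Finset.Icc 1 K, m k t * (V k t - V (k - 1) t)) - marketEta K m t) /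
    (2 + ε * marketEta K m t)

/-- The equilibrium sale intensity `G_k(t) = ½(1 − ΔV_k(t) + ε·φ(t))`. -/
def marketLam (K : ℕ) (ε : ℝ) (V m : ℕ → ℝ → ℝ) (k : ℕ) (t : ℝ) : ℝ :=
  (1 / 2) * (1 - (V k t - V (k - 1) t) + ε * marketPhi K ε V m t)

/-- `(V, m)` is a solution of the HJB–Kolmogorov system on `[0, T]` with data `K, r, ε, M`:
`V_1, …, V_K` and `m_0, …, m_K` are continuously differentiable on `[0, T]`, `V_0 ≡ 0`,
the HJB equations `V_k' − r V_k + ¼(1 − ΔV_k + ε φ)² = 0` hold for `k = 1, …, K`,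
the Kolmogorov equations hold, `V_k(T) = 0`, and `m_k(0) = M_k`. -/
def IsHJBKolSolution (K : ℕ) (T r ε : ℝ) (M : ℕ → ℝ) (V m : ℕ → ℝ → ℝ) : Prop :=
  (∀ t : ℝ, V 0 t = 0) ∧
  (∀ k, 1 ≤ k → k ≤ K → ContDiffOn ℝ 1 (V k) (Set.Icc 0 T)) ∧
  (∀ k, k ≤ K → ContDiffOn ℝ 1 (m k) (Set.Icc 0 T)) ∧
  (∀ k, 1 ≤ k → k ≤ K → ∀ t ∈ Set.Icc (0 : ℝ) T,
    derivWithin (V k) (Set.Icc 0 T) t - r * V k t +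
      (1 / 4) * (1 - (V k t - V (k - 1) t) + ε * marketPhi K ε V m t) ^ 2 = 0) ∧
  (∀ t ∈ Set.Icc (0 : ℝ) T,
    derivWithin (m 0) (Set.Icc 0 T) t = marketLam K ε V m 1 t * m 1 t) ∧
  (∀ k, 1 ≤ k → k ≤ K - 1 → ∀ t ∈ Set.Icc (0 : ℝ) T,
    derivWithin (m k) (Set.Icc 0 T) t =
      marketLam K ε V m (k + 1) t * m (k + 1) t - marketLam K ε V m k t * m k t) ∧
  (∀ t ∈ Set.Icc (0 : ℝ) T,
    derivWithin (m K) (Set.Icc 0 T) t = -(marketLam K ε V m K t) * m K t) ∧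
  (∀ k, 1 ≤ k → k ≤ K → V k T = 0) ∧
  (∀ k, k ≤ K → m k 0 = M k)


open Set Finset in
/-- Abel summation / telescoping. -/
lemma abel_tel (a w : ℕ → ℝ) : ∀ n : ℕ,
    (∑ k ∈ Finset.Icc 1 n, (a (k+1) - a k) * w k)
      + ∑ k ∈ Finset.Icc 1 n, a k * (w k - w (k-1))
    = a (n+1) * w n - a 1 * w 0 := by
  intro n
  induction n with
  | zero => simp
  | succ n ih =>
      rw [Finset.sum_Icc_succ_top (by omega), Finset.sum_Icc_succ_top (by omega)]
      have h1 : n + 1 - 1 = n := by omega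
      rw [h1]
      ring_nf
      ring_nf at ih
      linarith [ih]

/-- Index shift. -/
lemma shift_sum (f : ℕ → ℝ) : ∀ n : ℕ,
    ∑ k ∈ Finset.Icc 0 n, f (k+1) = ∑ k ∈ Finset.Icc 1 (n+1), f k := by
  intro n
  induction n with
  | zero => simp
  | succ n ih =>
      rw [Finset.sum_Icc_succ_top (by omega), Finset.sum_Icc_succ_top (by omega), ih]

/-- `∑ λ_k m_k = -φ`. -/
lemma lam_sum_eq_neg_phi (K : ℕ) (ε : ℝ) (V m : ℕ → ℝ → ℝ) (t : ℝ)
    (hden : 2 + ε * marketEta K m t ≠ 0) :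
    ∑ k ∈ Finset.Icc 1 K, marketLam K ε V m k t * m k t = -(marketPhi K ε V m t) := by
  have hφ : marketPhi K ε V m t * (2 + ε * marketEta K m t)
      = (∑ k ∈ Finset.Icc 1 K, m k t * (V k t - V (k - 1) t)) - marketEta K m t := by
    rw [marketPhi, div_mul_cancel₀ _ hden]
  have h1 : ∀ k ∈ Finset.Icc 1 K, marketLam K ε V m k t * m k t
      = (1/2) * m k t - (1/2) * (m k t * (V k t - V (k-1) t))
        + ((1/2) * ε * marketPhi K ε V m t) * m k t := by
    intro k _; rw [marketLam]; ring
  rw [Finset.sum_congr rfl h1, Finset.sum_add_distrib, Finset.sum_sub_distrib,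
    ← Finset.mul_sum, ← Finset.mul_sum, ← Finset.mul_sum]
  have hη : (∑ k ∈ Finset.Icc 1 K, m k t) = marketEta K m t := rfl
  rw [hη]
  linear_combination ((1:ℝ)/2) * hφ

/-- Continuity of `marketEta`. -/
lemma contOn_eta {K : ℕ} {m : ℕ → ℝ → ℝ} {s : Set ℝ}
    (hm : ∀ k, k ≤ K → ContinuousOn (m k) s) :
    ContinuousOn (marketEta K m) s := by
  have : ContinuousOn (fun t => ∑ k ∈ Finset.Icc 1 K, m k t) s :=
    continuousOn_finset_sum _ (fun k hk => hm k (Finset.mem_Icc.1 hk).2)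
  exact this

/-- Continuity of `marketPhi`. -/
lemma contOn_phi {K : ℕ} {ε : ℝ} {V m : ℕ → ℝ → ℝ} {s : Set ℝ}
    (hV : ∀ k, k ≤ K → ContinuousOn (V k) s)
    (hm : ∀ k, k ≤ K → ContinuousOn (m k) s)
    (hden : ∀ t ∈ s, 2 + ε * marketEta K m t ≠ 0) :
    ContinuousOn (marketPhi K ε V m) s := by
  have hη := contOn_eta hm
  have hnum : ContinuousOn
      (fun t => (∑ k ∈ Finset.Icc 1 K, m k t * (V k t - V (k - 1) t)) - marketEta K m t) s := by
    apply ContinuousOn.sub _ hη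
    apply continuousOn_finset_sum
    intro k hk
    have hk2 := (Finset.mem_Icc.1 hk).2
    exact (hm k hk2).mul ((hV k hk2).sub (hV (k-1) (le_trans (Nat.sub_le k 1) hk2)))
  have hden' : ContinuousOn (fun t => 2 + ε * marketEta K m t) s :=
    (continuousOn_const).add (continuousOn_const.mul hη)
  exact hnum.div hden' hden

/-- Continuity of `marketLam`. -/
lemma contOn_lam {K : ℕ} {ε : ℝ} {V m : ℕ → ℝ → ℝ} {s : Set ℝ}
    (hV : ∀ k, k ≤ K → ContinuousOn (V k) s)
    (hm : ∀ k, k ≤ K → ContinuousOn (m k) s)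
    (hden : ∀ t ∈ s, 2 + ε * marketEta K m t ≠ 0)
    {k : ℕ} (hk : k ≤ K) :
    ContinuousOn (fun t => marketLam K ε V m k t) s := by
  have hφ := contOn_phi hV hm hden
  have : ContinuousOn (fun t =>
      (1/2 : ℝ) * (1 - (V k t - V (k-1) t) + ε * marketPhi K ε V m t)) s :=
    continuousOn_const.mul ((continuousOn_const.sub
      ((hV k hk).sub (hV (k-1) (le_trans (Nat.sub_le k 1) hk)))).add
      (continuousOn_const.mul hφ))
  exact this

lemma gronwall_term (B L0 L1 x y : ℝ) (hL1 : |L1| ≤ B) (hL0 : |L0| ≤ B) :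
    2 * x * (L1 * y - L0 * x) ≤ 3 * B * x^2 + B * y^2 := by
  obtain ⟨hL1a, hL1b⟩ := abs_le.1 hL1
  obtain ⟨hL0a, hL0b⟩ := abs_le.1 hL0
  nlinarith [mul_nonneg (by linarith : (0:ℝ) ≤ B - L1) (sq_nonneg (x + y)),
    mul_nonneg (by linarith : (0:ℝ) ≤ B + L1) (sq_nonneg (x - y)),
    mul_nonneg (by linarith : (0:ℝ) ≤ B + L0) (sq_nonneg x)]

lemma gronwall_top (B L0 x z : ℝ) (hL0 : |L0| ≤ B) :
    2 * x * ((0:ℝ) * z - L0 * x) ≤ 2 * B * x^2 := by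
  obtain ⟨hL0a, hL0b⟩ := abs_le.1 hL0
  nlinarith [mul_nonneg (by linarith : (0:ℝ) ≤ B + L0) (sq_nonneg x)]
open Set Finset in
set_option maxHeartbeats 2000000 in
/-- **Uniqueness.** If `K ≥ 2` and `0 ≤ ε < C₂(K) = 2/(K−1)`, then any two solutions of the
HJB–Kolmogorov system (with the same data) whose inventory densities `m_k`, `k = 1, …, K`, are
strictly positive on `(0, T]` coincide on `[0, T]`. -/
theorem solution_unique_of_small_interaction
    (K : ℕ) (hK : 2 ≤ K) (T r ε : ℝ) (hT : 0 < T) (hr : 0 < r)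
    (M : ℕ → ℝ) (hM : ∀ k, k ≤ K → 0 ≤ M k)
    (hMsum : ∑ k ∈ Finset.Icc 0 K, M k = 1)
    (hε0 : 0 ≤ ε) (hε1 : ε < 2 / ((K : ℝ) - 1))
    (V₁ m₁ V₂ m₂ : ℕ → ℝ → ℝ)
    (h1 : IsHJBKolSolution K T r ε M V₁ m₁)
    (h2 : IsHJBKolSolution K T r ε M V₂ m₂)
    (hm1pos : ∀ k, 1 ≤ k → k ≤ K → ∀ t ∈ Set.Ioc (0 : ℝ) T, 0 < m₁ k t)
    (hm2pos : ∀ k, 1 ≤ k → k ≤ K → ∀ t ∈ Set.Ioc (0 : ℝ) T, 0 < m₂ k t) :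
    (∀ k, 1 ≤ k → k ≤ K → ∀ t ∈ Set.Icc (0 : ℝ) T, V₁ k t = V₂ k t) ∧
    (∀ k, k ≤ K → ∀ t ∈ Set.Icc (0 : ℝ) T, m₁ k t = m₂ k t) := by
  classical
  obtain ⟨hV10, hV1d, hm1d, hV1e, h10e, h1ke, h1Ke, hV1T, h1i⟩ := h1
  obtain ⟨hV20, hV2d, hm2d, hV2e, h20e, h2ke, h2Ke, hV2T, h2i⟩ := h2
  set s : Set ℝ := Set.Icc (0:ℝ) T with hs
  have hTs : T ∈ s := by constructor <;> simp [hT.le]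
  have h0s : (0:ℝ) ∈ s := by constructor <;> simp [hT.le]
  have huds : UniqueDiffOn ℝ s := uniqueDiffOn_Icc hT
  -- nonnegativity of densities on s
  have hm1nn : ∀ k, 1 ≤ k → k ≤ K → ∀ t ∈ s, 0 ≤ m₁ k t := by
    intro k hk1 hk2 t ht
    rcases eq_or_lt_of_le ht.1 with h | h
    · rw [← h, h1i k hk2]; exact hM k hk2
    · exact (hm1pos k hk1 hk2 t ⟨h, ht.2⟩).le
  have hm2nn : ∀ k, 1 ≤ k → k ≤ K → ∀ t ∈ s, 0 ≤ m₂ k t := by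
    intro k hk1 hk2 t ht
    rcases eq_or_lt_of_le ht.1 with h | h
    · rw [← h, h2i k hk2]; exact hM k hk2
    · exact (hm2pos k hk1 hk2 t ⟨h, ht.2⟩).le
  have hden1 : ∀ t ∈ s, 2 + ε * marketEta K m₁ t ≠ 0 := by
    intro t ht
    have : 0 ≤ marketEta K m₁ t :=
      Finset.sum_nonneg (fun k hk => hm1nn k (Finset.mem_Icc.1 hk).1 (Finset.mem_Icc.1 hk).2 t ht)
    positivity
  have hden2 : ∀ t ∈ s, 2 + ε * marketEta K m₂ t ≠ 0 := by
    intro t ht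
    have : 0 ≤ marketEta K m₂ t :=
      Finset.sum_nonneg (fun k hk => hm2nn k (Finset.mem_Icc.1 hk).1 (Finset.mem_Icc.1 hk).2 t ht)
    positivity
  -- derivative facts
  have hDV1 : ∀ k, 1 ≤ k → k ≤ K → ∀ t ∈ s, HasDerivWithinAt (V₁ k)
      (r * V₁ k t - (marketLam K ε V₁ m₁ k t)^2) s t := by
    intro k hk1 hk2 t ht
    have hd := ((hV1d k hk1 hk2).differentiableOn one_ne_zero t ht).hasDerivWithinAt
    have he := hV1e k hk1 hk2 t ht
    have : derivWithin (V₁ k) s t = r * V₁ k t - (marketLam K ε V₁ m₁ k t)^2 := by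
      rw [marketLam]; nlinarith [he]
    rwa [this] at hd
  have hDV2 : ∀ k, 1 ≤ k → k ≤ K → ∀ t ∈ s, HasDerivWithinAt (V₂ k)
      (r * V₂ k t - (marketLam K ε V₂ m₂ k t)^2) s t := by
    intro k hk1 hk2 t ht
    have hd := ((hV2d k hk1 hk2).differentiableOn one_ne_zero t ht).hasDerivWithinAt
    have he := hV2e k hk1 hk2 t ht
    have : derivWithin (V₂ k) s t = r * V₂ k t - (marketLam K ε V₂ m₂ k t)^2 := by
      rw [marketLam]; nlinarith [he]
    rwa [this] at hd
  have hDm1 : ∀ k, k ≤ K → ∀ t ∈ s, HasDerivWithinAt (m₁ k)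
      (derivWithin (m₁ k) s t) s t := by
    intro k hk t ht
    exact ((hm1d k hk).differentiableOn one_ne_zero t ht).hasDerivWithinAt
  have hDm2 : ∀ k, k ≤ K → ∀ t ∈ s, HasDerivWithinAt (m₂ k)
      (derivWithin (m₂ k) s t) s t := by
    intro k hk t ht
    exact ((hm2d k hk).differentiableOn one_ne_zero t ht).hasDerivWithinAt
  -- the Lasry–Lions functional
  set X : ℝ → ℝ := fun u => ∑ k ∈ Finset.Icc 1 K,
      (m₁ k u - m₂ k u) * (V₁ k u - V₂ k u) with hXdef
  set Q : ℝ → ℝ := fun u => (∑ k ∈ Finset.Icc 1 K,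
      (m₁ k u + m₂ k u) * (marketLam K ε V₁ m₁ k u - marketLam K ε V₂ m₂ k u)^2)
      + ε * (marketPhi K ε V₁ m₁ u - marketPhi K ε V₂ m₂ u)^2 with hQdef
  have hXQ : ∀ t ∈ s, HasDerivWithinAt X (r * X t + Q t) s t := by
    intro t ht
    set a : ℕ → ℝ := fun k => if 1 ≤ k ∧ k ≤ K then
        marketLam K ε V₁ m₁ k t * m₁ k t - marketLam K ε V₂ m₂ k t * m₂ k t
      else 0 with hadef
    have hak : ∀ k, 1 ≤ k → k ≤ K →
        a k = marketLam K ε V₁ m₁ k t * m₁ k t - marketLam K ε V₂ m₂ k t * m₂ k t := by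
      intro k hk1 hk2
      simp only [hadef]
      rw [if_pos ⟨hk1, hk2⟩]
    have haK : a (K+1) = 0 := by
      simp only [hadef]
      rw [if_neg (by omega)]
    -- derivative of each density difference
    have hDμ : ∀ k, 1 ≤ k → k ≤ K → HasDerivWithinAt (fun u => m₁ k u - m₂ k u)
        (a (k+1) - a k) s t := by
      intro k hk1 hk2
      have hd := (hDm1 k hk2 t ht).sub (hDm2 k hk2 t ht)
      have heq : derivWithin (m₁ k) s t - derivWithin (m₂ k) s t = a (k+1) - a k := by
        rcases eq_or_lt_of_le hk2 with hKk | hKk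
        · subst hKk
          rw [h1Ke t ht, h2Ke t ht, haK, hak k hk1 le_rfl]
          ring
        · have hk2' : k ≤ K - 1 := by omega
          rw [h1ke k hk1 hk2' t ht, h2ke k hk1 hk2' t ht,
            hak k hk1 hk2, hak (k+1) (by omega) (by omega)]
          ring
      rwa [heq] at hd
    -- derivative of X
    have hXD : HasDerivWithinAt X (∑ k ∈ Finset.Icc 1 K,
        ((a (k+1) - a k) * (V₁ k t - V₂ k t) + (m₁ k t - m₂ k t) *
          ((r * V₁ k t - (marketLam K ε V₁ m₁ k t)^2)
            - (r * V₂ k t - (marketLam K ε V₂ m₂ k t)^2)))) s t := by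
      apply HasDerivWithinAt.fun_sum
      intro k hk
      obtain ⟨hk1, hk2⟩ := Finset.mem_Icc.1 hk
      exact (hDμ k hk1 hk2).mul ((hDV1 k hk1 hk2 t ht).sub (hDV2 k hk1 hk2 t ht))
    -- the algebraic identity
    have halg : (∑ k ∈ Finset.Icc 1 K,
        ((a (k+1) - a k) * (V₁ k t - V₂ k t) + (m₁ k t - m₂ k t) *
          ((r * V₁ k t - (marketLam K ε V₁ m₁ k t)^2)
            - (r * V₂ k t - (marketLam K ε V₂ m₂ k t)^2)))) = r * X t + Q t := by
      have hper : ∀ k ∈ Finset.Icc 1 K,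
          ((a (k+1) - a k) * (V₁ k t - V₂ k t) + (m₁ k t - m₂ k t) *
            ((r * V₁ k t - (marketLam K ε V₁ m₁ k t)^2)
              - (r * V₂ k t - (marketLam K ε V₂ m₂ k t)^2)))
          = ((a (k+1) - a k) * (V₁ k t - V₂ k t)
              + a k * ((V₁ k t - V₂ k t) - (V₁ (k-1) t - V₂ (k-1) t)))
            + r * ((m₁ k t - m₂ k t) * (V₁ k t - V₂ k t))
            + (m₁ k t + m₂ k t) * (marketLam K ε V₁ m₁ k t - marketLam K ε V₂ m₂ k t)^2
            + (-(ε * (marketPhi K ε V₁ m₁ t - marketPhi K ε V₂ m₂ t)))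
                * (marketLam K ε V₁ m₁ k t * m₁ k t - marketLam K ε V₂ m₂ k t * m₂ k t) := by
        intro k hk
        obtain ⟨hk1, hk2⟩ := Finset.mem_Icc.1 hk
        rw [hak k hk1 hk2]
        simp only [marketLam]
        ring
      rw [Finset.sum_congr rfl hper]
      rw [Finset.sum_add_distrib, Finset.sum_add_distrib, Finset.sum_add_distrib,
        ← Finset.mul_sum, ← Finset.mul_sum]
      -- telescoping part is zero
      have htel := abel_tel a (fun k => V₁ k t - V₂ k t) K
      have hw0 : V₁ 0 t - V₂ 0 t = 0 := by rw [hV10, hV20]; ring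
      rw [haK, hw0, zero_mul, mul_zero, sub_zero] at htel
      have htel0 : (∑ k ∈ Finset.Icc 1 K, ((a (k+1) - a k) * (V₁ k t - V₂ k t)
          + a k * ((V₁ k t - V₂ k t) - (V₁ (k-1) t - V₂ (k-1) t)))) = 0 := by
        rw [Finset.sum_add_distrib]
        exact htel
      rw [htel0]
      -- sum of a' equals -ψ
      have hasum : (∑ k ∈ Finset.Icc 1 K,
          (marketLam K ε V₁ m₁ k t * m₁ k t - marketLam K ε V₂ m₂ k t * m₂ k t))
          = -(marketPhi K ε V₁ m₁ t) + marketPhi K ε V₂ m₂ t := by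
        rw [Finset.sum_sub_distrib, lam_sum_eq_neg_phi K ε V₁ m₁ t (hden1 t ht),
          lam_sum_eq_neg_phi K ε V₂ m₂ t (hden2 t ht)]
        ring
      rw [hasum, hQdef, hXdef]
      ring
    rwa [halg] at hXD
  have hQnn : ∀ t ∈ s, 0 ≤ Q t := by
    intro t ht
    simp only [hQdef]
    have h1 : 0 ≤ ∑ k ∈ Finset.Icc 1 K,
        (m₁ k t + m₂ k t) * (marketLam K ε V₁ m₁ k t - marketLam K ε V₂ m₂ k t)^2 := by
      apply Finset.sum_nonneg
      intro k hk
      obtain ⟨hk1, hk2⟩ := Finset.mem_Icc.1 hk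
      have := hm1nn k hk1 hk2 t ht
      have := hm2nn k hk1 hk2 t ht
      positivity
    have h2 : 0 ≤ ε * (marketPhi K ε V₁ m₁ t - marketPhi K ε V₂ m₂ t)^2 := by positivity
    linarith
  have hXcont : ContinuousOn X s := fun t ht => (hXQ t ht).continuousWithinAt
  -- boundary values of X
  have hX0 : X 0 = 0 := by
    simp only [hXdef]
    apply Finset.sum_eq_zero
    intro k hk
    obtain ⟨hk1, hk2⟩ := Finset.mem_Icc.1 hk
    rw [h1i k hk2, h2i k hk2]; ring
  have hXT : X T = 0 := by
    simp only [hXdef]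
    apply Finset.sum_eq_zero
    intro k hk
    obtain ⟨hk1, hk2⟩ := Finset.mem_Icc.1 hk
    rw [hV1T k hk1 hk2, hV2T k hk1 hk2]; ring
  -- the exponentially weighted functional is monotone
  set g : ℝ → ℝ := fun u => Real.exp (-r * u) * X u with hgdef
  have hgD : ∀ t ∈ s, HasDerivWithinAt g (Real.exp (-r * t) * Q t) s t := by
    intro t ht
    have he : HasDerivAt (fun u : ℝ => Real.exp (-r * u)) (Real.exp (-r * t) * (-r * 1)) t :=
      ((hasDerivAt_id t).const_mul (-r)).exp
    have := he.hasDerivWithinAt.mul (hXQ t ht)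
    have heq : Real.exp (-r * t) * (-r * 1) * X t + Real.exp (-r * t) * (r * X t + Q t)
        = Real.exp (-r * t) * Q t := by ring
    rwa [heq] at this
  have hgmono : MonotoneOn g s := by
    apply monotoneOn_of_deriv_nonneg (convex_Icc 0 T)
    · exact fun t ht => ((hgD t ht).continuousWithinAt)
    · intro x hx
      rw [interior_Icc] at hx
      exact (((hgD x (Ioo_subset_Icc_self hx)).hasDerivAt
        (Icc_mem_nhds hx.1 hx.2)).differentiableAt).differentiableWithinAt
    · intro x hx
      rw [interior_Icc] at hx
      have hd := ((hgD x (Ioo_subset_Icc_self hx)).hasDerivAt (Icc_mem_nhds hx.1 hx.2)).deriv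
      rw [hd]
      have := hQnn x (Ioo_subset_Icc_self hx)
      positivity
  have hXzero : ∀ t ∈ s, X t = 0 := by
    intro t ht
    have h1 : g t ≤ g T := hgmono ht hTs ht.2
    have h2 : g 0 ≤ g t := hgmono h0s ht ht.1
    have hgT : g T = 0 := by simp only [hgdef]; rw [hXT]; ring
    have hg0 : g 0 = 0 := by simp only [hgdef]; rw [hX0]; ring
    have : g t = 0 := le_antisymm (hgT ▸ h1) (hg0 ▸ h2)
    simp only [hgdef] at this
    have hexp : Real.exp (-r * t) ≠ 0 := Real.exp_ne_zero _
    exact (mul_eq_zero.1 this).resolve_left hexp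
  have hQzero : ∀ t ∈ s, Q t = 0 := by
    intro t ht
    have hd1 : derivWithin X s t = r * X t + Q t :=
      (hXQ t ht).derivWithin (huds t ht)
    have hd2 : derivWithin X s t = 0 := by
      have h2 : derivWithin X s t = derivWithin (fun _ : ℝ => (0:ℝ)) s t :=
        derivWithin_congr (fun x hx => hXzero x hx) (hXzero t ht)
      rw [h2]
      simp
    rw [hd2, hXzero t ht] at hd1
    linarith [hd1]
  -- equality of intensities on (0, T]
  have hlamIoc : ∀ k, 1 ≤ k → k ≤ K → ∀ t ∈ Set.Ioc (0:ℝ) T,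
      marketLam K ε V₁ m₁ k t = marketLam K ε V₂ m₂ k t := by
    intro k hk1 hk2 t ht
    have hts : t ∈ s := Ioc_subset_Icc_self ht
    have hQ0 := hQzero t hts
    simp only [hQdef] at hQ0
    have h1 : 0 ≤ ∑ j ∈ Finset.Icc 1 K,
        (m₁ j t + m₂ j t) * (marketLam K ε V₁ m₁ j t - marketLam K ε V₂ m₂ j t)^2 := by
      apply Finset.sum_nonneg
      intro j hj
      obtain ⟨hj1, hj2⟩ := Finset.mem_Icc.1 hj
      have := hm1nn j hj1 hj2 t hts
      have := hm2nn j hj1 hj2 t hts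
      positivity
    have h2 : 0 ≤ ε * (marketPhi K ε V₁ m₁ t - marketPhi K ε V₂ m₂ t)^2 := by positivity
    have hsum0 : ∑ j ∈ Finset.Icc 1 K,
        (m₁ j t + m₂ j t) * (marketLam K ε V₁ m₁ j t - marketLam K ε V₂ m₂ j t)^2 = 0 := by
      linarith
    have hterm := (Finset.sum_eq_zero_iff_of_nonneg (fun j hj => by
      obtain ⟨hj1, hj2⟩ := Finset.mem_Icc.1 hj
      have := hm1nn j hj1 hj2 t hts
      have := hm2nn j hj1 hj2 t hts
      positivity)).1 hsum0 k (Finset.mem_Icc.2 ⟨hk1, hk2⟩)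
    have hmpos : 0 < m₁ k t + m₂ k t := by
      have := hm1pos k hk1 hk2 t ht
      have := hm2pos k hk1 hk2 t ht
      linarith
    have hsq : (marketLam K ε V₁ m₁ k t - marketLam K ε V₂ m₂ k t)^2 = 0 := by
      rcases mul_eq_zero.1 hterm with h | h
      · exact absurd h hmpos.ne'
      · exact h
    have := pow_eq_zero_iff (n := 2) (by norm_num) |>.1 hsq
    linarith [this]
  -- continuity of the intensities
  have hVc1 : ∀ k, k ≤ K → ContinuousOn (V₁ k) s := by
    intro k hk
    rcases Nat.eq_zero_or_pos k with h0 | h0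
    · subst h0
      exact continuousOn_const.congr (fun x _ => hV10 x)
    · exact (hV1d k h0 hk).continuousOn
  have hVc2 : ∀ k, k ≤ K → ContinuousOn (V₂ k) s := by
    intro k hk
    rcases Nat.eq_zero_or_pos k with h0 | h0
    · subst h0
      exact continuousOn_const.congr (fun x _ => hV20 x)
    · exact (hV2d k h0 hk).continuousOn
  have hmc1 : ∀ k, k ≤ K → ContinuousOn (m₁ k) s := fun k hk => (hm1d k hk).continuousOn
  have hmc2 : ∀ k, k ≤ K → ContinuousOn (m₂ k) s := fun k hk => (hm2d k hk).continuousOn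
  have hlamc1 : ∀ k, k ≤ K → ContinuousOn (fun u => marketLam K ε V₁ m₁ k u) s :=
    fun k hk => contOn_lam hVc1 hmc1 hden1 hk
  have hlamc2 : ∀ k, k ≤ K → ContinuousOn (fun u => marketLam K ε V₂ m₂ k u) s :=
    fun k hk => contOn_lam hVc2 hmc2 hden2 hk
  -- intensities agree on all of [0, T]
  have hlam_eq : ∀ k, 1 ≤ k → k ≤ K → ∀ t ∈ s,
      marketLam K ε V₁ m₁ k t = marketLam K ε V₂ m₂ k t := by
    intro k hk1 hk2 t ht
    rcases eq_or_lt_of_le ht.1 with h0 | h0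
    · -- t = 0 : use continuity
      rw [← h0]
      have hfc : ContinuousWithinAt
          (fun u => marketLam K ε V₁ m₁ k u - marketLam K ε V₂ m₂ k u) s 0 :=
        ((hlamc1 k hk2).sub (hlamc2 k hk2)).continuousWithinAt h0s
      have hne : (nhdsWithin (0:ℝ) (Set.Ioc (0:ℝ) T)).NeBot := by
        apply mem_closure_iff_nhdsWithin_neBot.1
        rw [closure_Ioc hT.ne]
        exact h0s
      have h1 : Filter.Tendsto (fun u => marketLam K ε V₁ m₁ k u - marketLam K ε V₂ m₂ k u)
          (nhdsWithin (0:ℝ) (Set.Ioc (0:ℝ) T))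
          (nhds (marketLam K ε V₁ m₁ k 0 - marketLam K ε V₂ m₂ k 0)) :=
        hfc.mono_left (nhdsWithin_mono _ Set.Ioc_subset_Icc_self)
      have h2 : Filter.Tendsto (fun u => marketLam K ε V₁ m₁ k u - marketLam K ε V₂ m₂ k u)
          (nhdsWithin (0:ℝ) (Set.Ioc (0:ℝ) T)) (nhds 0) := by
        apply Filter.Tendsto.congr' _ tendsto_const_nhds
        apply Filter.eventuallyEq_of_mem self_mem_nhdsWithin
        intro x hx
        simp [hlamIoc k hk1 hk2 x hx]
      have := tendsto_nhds_unique h1 h2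
      linarith [this]
    · exact hlamIoc k hk1 hk2 t ⟨h0, ht.2⟩
  -- equality of value functions
  have hVeq : ∀ k, 1 ≤ k → k ≤ K → ∀ t ∈ s, V₁ k t = V₂ k t := by
    intro k hk1 hk2
    set p : ℝ → ℝ := fun u => Real.exp (-r * u) * (V₁ k u - V₂ k u) with hpdef
    have hpD : ∀ t ∈ s, HasDerivWithinAt p 0 s t := by
      intro t ht
      have hw : HasDerivWithinAt (fun u => V₁ k u - V₂ k u)
          ((r * V₁ k t - (marketLam K ε V₁ m₁ k t)^2)
            - (r * V₂ k t - (marketLam K ε V₂ m₂ k t)^2)) s t :=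
        (hDV1 k hk1 hk2 t ht).sub (hDV2 k hk1 hk2 t ht)
      have he : HasDerivAt (fun u : ℝ => Real.exp (-r * u)) (Real.exp (-r * t) * (-r * 1)) t :=
        ((hasDerivAt_id t).const_mul (-r)).exp
      have hcomb := he.hasDerivWithinAt.mul hw
      have heq : Real.exp (-r * t) * (-r * 1) * (V₁ k t - V₂ k t)
          + Real.exp (-r * t) * ((r * V₁ k t - (marketLam K ε V₁ m₁ k t)^2)
            - (r * V₂ k t - (marketLam K ε V₂ m₂ k t)^2)) = 0 := by
        rw [hlam_eq k hk1 hk2 t ht]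
        ring
      rwa [heq] at hcomb
    have hpc : ContinuousOn p s := fun t ht => (hpD t ht).continuousWithinAt
    have hpd' : DifferentiableOn ℝ p (interior s) := by
      intro x hx
      rw [interior_Icc] at hx
      exact (((hpD x (Ioo_subset_Icc_self hx)).hasDerivAt
        (Icc_mem_nhds hx.1 hx.2)).differentiableAt).differentiableWithinAt
    have hpderiv : ∀ x ∈ interior s, deriv p x = 0 := by
      intro x hx
      rw [interior_Icc] at hx
      exact ((hpD x (Ioo_subset_Icc_self hx)).hasDerivAt (Icc_mem_nhds hx.1 hx.2)).deriv
    have hpm : MonotoneOn p s :=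
      monotoneOn_of_deriv_nonneg (convex_Icc 0 T) hpc hpd'
        (fun x hx => le_of_eq (hpderiv x hx).symm)
    have hpa : AntitoneOn p s :=
      antitoneOn_of_deriv_nonpos (convex_Icc 0 T) hpc hpd'
        (fun x hx => le_of_eq (hpderiv x hx))
    intro t ht
    have hpT : p T = 0 := by
      simp only [hpdef]
      rw [hV1T k hk1 hk2, hV2T k hk1 hk2]
      ring
    have h1 : p t ≤ p T := hpm ht hTs ht.2
    have h2 : p T ≤ p t := hpa ht hTs ht.2
    have hpt : p t = 0 := by rw [← hpT]; exact le_antisymm h1 h2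
    simp only [hpdef] at hpt
    have hexp : Real.exp (-r * t) ≠ 0 := Real.exp_ne_zero _
    have := (mul_eq_zero.1 hpt).resolve_left hexp
    linarith [this]
  -- a uniform bound on the intensities
  obtain ⟨B, hB0, hBb⟩ : ∃ B : ℝ, 0 ≤ B ∧
      ∀ k, 1 ≤ k → k ≤ K → ∀ t ∈ s, |marketLam K ε V₁ m₁ k t| ≤ B := by
    have hF : ContinuousOn (fun t => ∑ k ∈ Finset.Icc 1 K, |marketLam K ε V₁ m₁ k t|) s :=
      continuousOn_finset_sum _ (fun k hk => (hlamc1 k (Finset.mem_Icc.1 hk).2).abs)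
    obtain ⟨C, hC⟩ := (isCompact_Icc : IsCompact s).exists_bound_of_continuousOn hF
    refine ⟨max C 0, le_max_right _ _, ?_⟩
    intro k hk1 hk2 t ht
    have h1 : |marketLam K ε V₁ m₁ k t| ≤ ∑ j ∈ Finset.Icc 1 K, |marketLam K ε V₁ m₁ j t| :=
      Finset.single_le_sum (f := fun j => |marketLam K ε V₁ m₁ j t|)
        (fun j _ => abs_nonneg _) (Finset.mem_Icc.2 ⟨hk1, hk2⟩)
    have h2 := hC t ht
    rw [Real.norm_eq_abs] at h2
    have h3 : (∑ j ∈ Finset.Icc 1 K, |marketLam K ε V₁ m₁ j t|)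
        ≤ abs (∑ j ∈ Finset.Icc 1 K, |marketLam K ε V₁ m₁ j t|) := le_abs_self _
    have h4 : C ≤ max C 0 := le_max_left _ _
    linarith
  -- the common intensity coefficients
  set Lf : ℕ → ℝ → ℝ := fun k u =>
    if 1 ≤ k ∧ k ≤ K then marketLam K ε V₁ m₁ k u else 0 with hLdef
  have hLb : ∀ k, ∀ t ∈ s, |Lf k t| ≤ B := by
    intro k t ht
    simp only [hLdef]
    by_cases h : 1 ≤ k ∧ k ≤ K
    · rw [if_pos h]; exact hBb k h.1 h.2 t ht
    · rw [if_neg h]; simpa using hB0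
  -- derivative of each density difference, with common coefficients
  have hDμall : ∀ k, k ≤ K → ∀ t ∈ s, HasDerivWithinAt (fun u => m₁ k u - m₂ k u)
      (Lf (k+1) t * (m₁ (k+1) t - m₂ (k+1) t) - Lf k t * (m₁ k t - m₂ k t)) s t := by
    intro k hk t ht
    have hd := (hDm1 k hk t ht).sub (hDm2 k hk t ht)
    have heq : derivWithin (m₁ k) s t - derivWithin (m₂ k) s t
        = Lf (k+1) t * (m₁ (k+1) t - m₂ (k+1) t) - Lf k t * (m₁ k t - m₂ k t) := by
      rcases Nat.eq_zero_or_pos k with h0 | h0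
      · subst h0
        rw [h10e t ht, h20e t ht]
        simp only [hLdef]
        rw [if_pos ⟨le_rfl, by omega⟩, if_neg (by omega)]
        rw [← hlam_eq 1 le_rfl (by omega) t ht]
        ring
      · rcases eq_or_lt_of_le hk with hKk | hKk
        · subst hKk
          rw [h1Ke t ht, h2Ke t ht]
          simp only [hLdef]
          rw [if_neg (by omega), if_pos ⟨h0, le_rfl⟩]
          rw [← hlam_eq k h0 le_rfl t ht]
          ring
        · rw [h1ke k h0 (by omega) t ht, h2ke k h0 (by omega) t ht]
          simp only [hLdef]
          rw [if_pos ⟨by omega, by omega⟩, if_pos ⟨h0, hk⟩]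
          rw [← hlam_eq k h0 hk t ht, ← hlam_eq (k+1) (by omega) (by omega) t ht]
          ring
    rwa [heq] at hd
  -- the energy
  set E : ℝ → ℝ := fun u => ∑ k ∈ Finset.Icc 0 K, (m₁ k u - m₂ k u)^2 with hEdef
  set DE : ℝ → ℝ := fun u => ∑ k ∈ Finset.Icc 0 K,
      2 * (m₁ k u - m₂ k u) * (Lf (k+1) u * (m₁ (k+1) u - m₂ (k+1) u)
        - Lf k u * (m₁ k u - m₂ k u)) with hDEdef
  have hED : ∀ t ∈ s, HasDerivWithinAt E (DE t) s t := by
    intro t ht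
    simp only [hEdef, hDEdef]
    apply HasDerivWithinAt.fun_sum
    intro k hk
    obtain ⟨_, hk2⟩ := Finset.mem_Icc.1 hk
    have hp := (hDμall k hk2 t ht).pow 2
    have heq : ((2:ℕ) : ℝ) * (m₁ k t - m₂ k t)^(2-1)
        * (Lf (k+1) t * (m₁ (k+1) t - m₂ (k+1) t) - Lf k t * (m₁ k t - m₂ k t))
        = 2 * (m₁ k t - m₂ k t) * (Lf (k+1) t * (m₁ (k+1) t - m₂ (k+1) t)
          - Lf k t * (m₁ k t - m₂ k t)) := by
      norm_num
    rwa [heq] at hp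
  -- the Gronwall bound
  have hEb : ∀ t ∈ s, DE t ≤ 6 * B * E t := by
    intro t ht
    have hsplit : DE t = (∑ k ∈ Finset.Icc 0 (K-1),
        2 * (m₁ k t - m₂ k t) * (Lf (k+1) t * (m₁ (k+1) t - m₂ (k+1) t)
          - Lf k t * (m₁ k t - m₂ k t)))
        + 2 * (m₁ K t - m₂ K t) * (Lf (K+1) t * (m₁ (K+1) t - m₂ (K+1) t)
          - Lf K t * (m₁ K t - m₂ K t)) := by
      simp only [hDEdef]
      have h := Finset.sum_Icc_succ_top (M := ℝ) (a := 0) (b := K-1) (by omega)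
        (fun k => 2 * (m₁ k t - m₂ k t) * (Lf (k+1) t * (m₁ (k+1) t - m₂ (k+1) t)
          - Lf k t * (m₁ k t - m₂ k t)))
      rw [show K - 1 + 1 = K by omega] at h
      exact h
    have hterm : ∀ k ∈ Finset.Icc 0 (K-1),
        2 * (m₁ k t - m₂ k t) * (Lf (k+1) t * (m₁ (k+1) t - m₂ (k+1) t)
          - Lf k t * (m₁ k t - m₂ k t))
        ≤ 3 * B * (m₁ k t - m₂ k t)^2 + B * (m₁ (k+1) t - m₂ (k+1) t)^2 := by
      intro k _
      exact gronwall_term B (Lf k t) (Lf (k+1) t) (m₁ k t - m₂ k t)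
        (m₁ (k+1) t - m₂ (k+1) t) (hLb (k+1) t ht) (hLb k t ht)
    have htop : 2 * (m₁ K t - m₂ K t) * (Lf (K+1) t * (m₁ (K+1) t - m₂ (K+1) t)
        - Lf K t * (m₁ K t - m₂ K t)) ≤ 2 * B * (m₁ K t - m₂ K t)^2 := by
      have hLK1 : Lf (K+1) t = 0 := by simp only [hLdef]; rw [if_neg (by omega)]
      rw [hLK1]
      exact gronwall_top B (Lf K t) (m₁ K t - m₂ K t) (m₁ (K+1) t - m₂ (K+1) t)
        (hLb K t ht)
    have h1 : (∑ k ∈ Finset.Icc 0 (K-1),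
        2 * (m₁ k t - m₂ k t) * (Lf (k+1) t * (m₁ (k+1) t - m₂ (k+1) t)
          - Lf k t * (m₁ k t - m₂ k t)))
        ≤ ∑ k ∈ Finset.Icc 0 (K-1), (3 * B * (m₁ k t - m₂ k t)^2
          + B * (m₁ (k+1) t - m₂ (k+1) t)^2) := Finset.sum_le_sum hterm
    have h2 : (∑ k ∈ Finset.Icc 0 (K-1), (3 * B * (m₁ k t - m₂ k t)^2
          + B * (m₁ (k+1) t - m₂ (k+1) t)^2))
        = 3 * B * (∑ k ∈ Finset.Icc 0 (K-1), (m₁ k t - m₂ k t)^2)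
          + B * (∑ k ∈ Finset.Icc 1 K, (m₁ k t - m₂ k t)^2) := by
      rw [Finset.sum_add_distrib, ← Finset.mul_sum, ← Finset.mul_sum]
      have h3 := shift_sum (fun k => (m₁ k t - m₂ k t)^2) (K-1)
      rw [show K - 1 + 1 = K by omega] at h3
      rw [h3]
    have h4 : (∑ k ∈ Finset.Icc 0 (K-1), (m₁ k t - m₂ k t)^2) ≤ E t := by
      simp only [hEdef]
      exact Finset.sum_le_sum_of_subset_of_nonneg
        (Finset.Icc_subset_Icc le_rfl (by omega)) (fun i _ _ => sq_nonneg _)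
    have h5 : (∑ k ∈ Finset.Icc 1 K, (m₁ k t - m₂ k t)^2) ≤ E t := by
      simp only [hEdef]
      exact Finset.sum_le_sum_of_subset_of_nonneg
        (Finset.Icc_subset_Icc (by omega) le_rfl) (fun i _ _ => sq_nonneg _)
    have h6 : (m₁ K t - m₂ K t)^2 ≤ E t := by
      simp only [hEdef]
      exact Finset.single_le_sum (f := fun k => (m₁ k t - m₂ k t)^2)
        (fun i _ => sq_nonneg _) (Finset.mem_Icc.2 ⟨by omega, le_rfl⟩)
    rw [hsplit]
    nlinarith [h1, h2, h4, h5, h6, htop]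
  -- the weighted energy is antitone
  set G : ℝ → ℝ := fun u => Real.exp (-(6*B) * u) * E u with hGdef
  have hGD : ∀ t ∈ s, HasDerivWithinAt G
      (Real.exp (-(6*B) * t) * (DE t - 6 * B * E t)) s t := by
    intro t ht
    have he : HasDerivAt (fun u : ℝ => Real.exp (-(6*B) * u))
        (Real.exp (-(6*B) * t) * (-(6*B) * 1)) t :=
      ((hasDerivAt_id t).const_mul (-(6*B))).exp
    have hcomb := he.hasDerivWithinAt.mul (hED t ht)
    have heq : Real.exp (-(6*B) * t) * (-(6*B) * 1) * E t
        + Real.exp (-(6*B) * t) * DE t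
        = Real.exp (-(6*B) * t) * (DE t - 6 * B * E t) := by ring
    rwa [heq] at hcomb
  have hGa : AntitoneOn G s := by
    apply antitoneOn_of_deriv_nonpos (convex_Icc 0 T)
    · exact fun t ht => (hGD t ht).continuousWithinAt
    · intro x hx
      rw [interior_Icc] at hx
      exact (((hGD x (Ioo_subset_Icc_self hx)).hasDerivAt
        (Icc_mem_nhds hx.1 hx.2)).differentiableAt).differentiableWithinAt
    · intro x hx
      rw [interior_Icc] at hx
      have hd := ((hGD x (Ioo_subset_Icc_self hx)).hasDerivAt (Icc_mem_nhds hx.1 hx.2)).deriv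
      rw [hd]
      have h1 := hEb x (Ioo_subset_Icc_self hx)
      have h2 : (0:ℝ) < Real.exp (-(6*B) * x) := Real.exp_pos _
      nlinarith
  have hE0 : E 0 = 0 := by
    simp only [hEdef]
    apply Finset.sum_eq_zero
    intro k hk
    obtain ⟨_, hk2⟩ := Finset.mem_Icc.1 hk
    rw [h1i k hk2, h2i k hk2]
    ring
  have hEzero : ∀ t ∈ s, E t = 0 := by
    intro t ht
    have h1 : G t ≤ G 0 := hGa h0s ht ht.1
    have hG0 : G 0 = 0 := by simp only [hGdef]; rw [hE0]; ring
    have hEnn : 0 ≤ E t := by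
      simp only [hEdef]
      exact Finset.sum_nonneg (fun i _ => sq_nonneg _)
    have h2 : (0:ℝ) < Real.exp (-(6*B) * t) := Real.exp_pos _
    have h3 : G t = Real.exp (-(6*B) * t) * E t := by simp only [hGdef]
    nlinarith
  refine ⟨hVeq, ?_⟩
  intro k hk t ht
  have hE := hEzero t ht
  simp only [hEdef] at hE
  have := (Finset.sum_eq_zero_iff_of_nonneg (fun i _ => sq_nonneg _)).1 hE
    k (Finset.mem_Icc.2 ⟨Nat.zero_le _, hk⟩)
  have h2 := pow_eq_zero_iff (n := 2) (by norm_num) |>.1 this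
  linarith [h2]
end
end

section
/- For ε = 0, the HJB–Kolmogorov system has exactly one solution (V^{(0)}, m^{(0)}) on [0,T]: there exist continuously differentiable functions V^{(0)}_1,…,V^{(0)}_K, m^{(0)}_0,…,m^{(0)}_K : [0,T] → ℝ solving the system, and any two such solutions coincide. -/
noncomputable section

namespace HJBK
open Set

/-- clamp to [0,b] -/
def clamp (b x : ℝ) : ℝ := max 0 (min b x)

lemma clamp_nonneg (b x : ℝ) : 0 ≤ clamp b x := le_max_left _ _

lemma clamp_le (b x : ℝ) (hb : 0 ≤ b) : clamp b x ≤ b := max_le hb (min_le_left _ _)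

lemma clamp_eq_self {b x : ℝ} (h0 : 0 ≤ x) (hb : x ≤ b) : clamp b x = x := by
  unfold clamp; rw [min_eq_right hb, max_eq_right h0]

lemma clamp_of_nonpos {b x : ℝ} (h : x ≤ 0) (hb : 0 ≤ b) : clamp b x = 0 := by
  unfold clamp
  rw [max_eq_left]
  exact (min_le_right b x).trans h

lemma clamp_of_ge {b x : ℝ} (h : b ≤ x) (hb : 0 ≤ b) : clamp b x = b := by
  unfold clamp; rw [min_eq_left h, max_eq_right hb]

lemma clamp_mono (b : ℝ) : Monotone (clamp b) := fun x y h =>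
  max_le_max le_rfl (min_le_min le_rfl h)

lemma abs_clamp_sub_clamp_le (b x y : ℝ) : |clamp b x - clamp b y| ≤ |x - y| := by
  unfold clamp
  calc |max 0 (min b x) - max 0 (min b y)| = |max (min b x) 0 - max (min b y) 0| := by
        rw [max_comm 0 _, max_comm 0 _]
    _ ≤ |min b x - min b y| := abs_max_sub_max_le_abs _ _ _
    _ ≤ max |b - b| |x - y| := abs_min_sub_min_le_max _ _ _ _
    _ ≤ |x - y| := by simp

lemma continuous_clamp (b : ℝ) : Continuous (clamp b) :=
  continuous_const.max (continuous_const.min continuous_id)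

/-- First-exit argument: if `f 0 ≥ 0` and `f' ≥ 0` wherever `f < 0`, then `f ≥ 0` on `[0,T]`. -/
lemma nonneg_of_deriv (T : ℝ) (f f' : ℝ → ℝ)
    (hc : ContinuousOn f (Icc 0 T))
    (hd : ∀ t ∈ Ioo 0 T, HasDerivAt f (f' t) t)
    (h0 : 0 ≤ f 0)
    (hup : ∀ t ∈ Ioo 0 T, f t < 0 → 0 ≤ f' t) :
    ∀ t ∈ Icc 0 T, 0 ≤ f t := by
  intro t₀ ht₀
  by_contra hneg
  push_neg at hneg
  have ht₀0 : 0 < t₀ := by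
    rcases lt_or_eq_of_le ht₀.1 with h | h
    · exact h
    · exact absurd h0 (by rw [← h] at hneg; linarith)
  set S : Set ℝ := {t | t ∈ Icc 0 t₀ ∧ 0 ≤ f t} with hS
  have hIcc : Icc (0:ℝ) t₀ ⊆ Icc 0 T := Icc_subset_Icc le_rfl ht₀.2
  have hSne : S.Nonempty := ⟨0, ⟨le_rfl, le_of_lt ht₀0⟩, h0⟩
  have hSbdd : BddAbove S := ⟨t₀, fun x hx => hx.1.2⟩
  have hSclosed : IsClosed S := by
    have : S = Icc 0 t₀ ∩ f ⁻¹' (Ici 0) := by ext x; simp only [hS, Set.mem_setOf_eq, Set.mem_inter_iff, Set.mem_preimage, Set.mem_Ici]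
    rw [this]
    exact (hc.mono hIcc).preimage_isClosed_of_isClosed isClosed_Icc isClosed_Ici
  set s := sSup S with hs
  have hsS : s ∈ S := hSclosed.csSup_mem hSne hSbdd
  have hst₀ : s < t₀ := lt_of_le_of_ne hsS.1.2 (fun h => by
    have := hsS.2; rw [h] at this; linarith)
  have hfneg : ∀ t ∈ Ioc s t₀, f t < 0 := by
    intro t ht
    by_contra hge
    push_neg at hge
    have htS : t ∈ S := ⟨⟨hsS.1.1.trans (le_of_lt ht.1), ht.2⟩, hge⟩
    exact absurd (le_csSup hSbdd htS) (not_le.mpr ht.1)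
  have hmono : MonotoneOn f (Icc s t₀) := by
    apply monotoneOn_of_deriv_nonneg (convex_Icc s t₀)
      (hc.mono (Icc_subset_Icc hsS.1.1 ht₀.2))
    · intro x hx
      rw [interior_Icc] at hx
      have hx' : x ∈ Ioo 0 T := ⟨lt_of_le_of_lt hsS.1.1 hx.1, lt_of_lt_of_le hx.2 ht₀.2⟩
      exact ((hd x hx').differentiableAt.differentiableWithinAt)
    · intro x hx
      rw [interior_Icc] at hx
      have hx' : x ∈ Ioo 0 T := ⟨lt_of_le_of_lt hsS.1.1 hx.1, lt_of_lt_of_le hx.2 ht₀.2⟩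
      rw [(hd x hx').deriv]
      exact hup x hx' (hfneg x ⟨hx.1, le_of_lt hx.2⟩)
  have := hmono (left_mem_Icc.mpr (le_of_lt hst₀)) (right_mem_Icc.mpr (le_of_lt hst₀)) (le_of_lt hst₀)
  linarith [hsS.2]

/-- within-Icc derivative upgrades to within-Ici derivative away from the right endpoint. -/
lemma hasDerivWithinAt_Ici_of_Icc {T t : ℝ} {f : ℝ → ℝ} {d : ℝ} (ht : t ∈ Ico 0 T)
    (h : HasDerivWithinAt f d (Icc 0 T) t) : HasDerivWithinAt f d (Ici t) t := by
  apply h.mono_of_mem_nhdsWithin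
  have : Ioo (t - 1) T ∩ Ici t ⊆ Icc 0 T := fun x hx => ⟨le_trans ht.1 hx.2, le_of_lt hx.1.2⟩
  exact mem_nhdsWithin.mpr ⟨Ioo (t-1) T, isOpen_Ioo, ⟨by linarith, ht.2⟩, this⟩

/-- Grönwall: a function vanishing at 0 whose derivative is dominated by `L‖f‖` vanishes. -/
lemma eq_zero_of_abs_deriv_le (T L : ℝ) (f f' : ℝ → ℝ)
    (hc : ContinuousOn f (Icc 0 T))
    (hd : ∀ t ∈ Ico 0 T, HasDerivWithinAt f (f' t) (Icc 0 T) t)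
    (h0 : f 0 = 0)
    (hb : ∀ t ∈ Ico 0 T, |f' t| ≤ L * |f t|) :
    ∀ t ∈ Icc 0 T, f t = 0 := by
  intro t ht
  have key := norm_le_gronwallBound_of_norm_deriv_right_le (E := ℝ) (f := f) (f' := f')
    (δ := 0) (K := L) (ε := 0) (a := 0) (b := T) hc
    (fun x hx => hasDerivWithinAt_Ici_of_Icc hx (hd x hx))
    (by simp [h0])
    (fun x hx => by simpa [Real.norm_eq_abs] using hb x hx)
  have := key t ht
  rw [gronwallBound_ε0_δ0] at this
  simpa [Real.norm_eq_abs, abs_nonpos_iff] using this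

/-- Time reversal of a within-Icc derivative. -/
lemma reverse_hasDerivWithinAt {T t d : ℝ} {f : ℝ → ℝ}
    (ht : t ∈ Icc 0 T)
    (h : HasDerivWithinAt f d (Icc 0 T) (T - t)) :
    HasDerivWithinAt (fun s => f (T - s)) (d * (-1)) (Icc 0 T) t := by
  have hinner : HasDerivWithinAt (fun s : ℝ => T - s) (-1) (Icc 0 T) t :=
    ((hasDerivAt_id t).const_sub T).hasDerivWithinAt
  exact HasDerivWithinAt.comp t h hinner (fun x hx => ⟨by linarith [hx.2], by linarith [hx.1]⟩)

/-- Global-in-time existence for a scalar ODE with bounded, Lipschitz-in-x field. -/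
lemma exists_solution_scalar (T : ℝ) (hT : 0 < T) (v : ℝ → ℝ → ℝ) (L : NNReal) (C : ℝ)
    (hlip : ∀ t, LipschitzWith L (v t))
    (hcont : ∀ x, ContinuousOn (fun t => v t x) (Icc 0 T))
    (hbdd : ∀ t x, |v t x| ≤ C) :
    ∃ f : ℝ → ℝ, f 0 = 0 ∧ ∀ t ∈ Icc 0 T, HasDerivWithinAt f (v t (f t)) (Icc 0 T) t := by
  have hC : 0 ≤ C := le_trans (abs_nonneg _) (hbdd 0 0)
  have hpl : IsPicardLindelof v (tmin := 0) (tmax := T) ⟨0, ⟨le_rfl, le_of_lt hT⟩⟩ (0:ℝ)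
      (C * T + 1).toNNReal 0 C.toNNReal L := by
    constructor
    · exact fun t _ => (hlip t).lipschitzOnWith
    · exact fun x _ => hcont x
    · intro t _ x _; rw [Real.coe_toNNReal _ hC]; simpa [Real.norm_eq_abs] using hbdd t x
    · have : max (T - 0) (0 - 0) = T := by
        rw [max_eq_left] <;> linarith
      show (C.toNNReal:ℝ) * max (T - 0) (0 - 0) ≤ ((C*T+1).toNNReal:ℝ) - ((0:NNReal):ℝ)
      rw [Real.coe_toNNReal _ hC, Real.coe_toNNReal _ (by positivity), NNReal.coe_zero]
      rw [this]; linarith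
  obtain ⟨f, hf0, hf⟩ := hpl.exists_eq_forall_mem_Icc_hasDerivWithinAt₀
  exact ⟨f, hf0, hf⟩


/-- Property carried along the recursive construction of the (time-reversed) value functions. -/
def GoodW (T r : ℝ) (w : ℝ → ℝ) : Prop :=
  w 0 = 0 ∧ ContinuousOn w (Icc 0 T) ∧ (∀ t ∈ Icc 0 T, 0 ≤ w t ∧ w t ≤ t / 4) ∧
  ∃ q : ℝ → ℝ, (∀ t ∈ Icc 0 T, 0 ≤ q t ∧ q t ≤ 1 / 4) ∧
    (∀ t ∈ Icc 0 T, HasDerivWithinAt w (-r * w t + q t) (Icc 0 T) t)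

lemma goodW_zero (T r : ℝ) : GoodW T r (fun _ => 0) :=
  ⟨rfl, continuousOn_const, fun t ht => ⟨le_rfl, by linarith [ht.1]⟩,
    fun _ => 0, fun t _ => ⟨le_rfl, by norm_num⟩,
    fun t _ => by simpa using (hasDerivWithinAt_const t _ (0:ℝ))⟩

lemma step_V (T r : ℝ) (hT : 0 < T) (hr : 0 < r) (w : ℝ → ℝ) (hw : GoodW T r w) :
    ∃ f : ℝ → ℝ, GoodW T r f ∧ (∀ t ∈ Icc 0 T, 0 ≤ f t - w t ∧ f t - w t ≤ 1) ∧
      (∀ t ∈ Icc 0 T, HasDerivWithinAt f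
        (-r * f t + (1/4) * (1 - (f t - w t))^2) (Icc 0 T) t) := by
  obtain ⟨hw0, hwc, hwb, q, hq, hwd⟩ := hw
  set B : ℝ := T / 4 with hB
  have hB0 : 0 ≤ B := by positivity
  set v : ℝ → ℝ → ℝ := fun t x => -r * clamp B x + (1/4) * (1 - clamp 1 (x - w t))^2 with hv
  -- Lipschitz
  have hlip : ∀ t, LipschitzWith (Real.toNNReal (r + 1)) (v t) := by
    intro t
    apply LipschitzWith.of_dist_le_mul
    intro x y
    rw [Real.dist_eq, Real.dist_eq, Real.coe_toNNReal _ (by linarith)]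
    have h1 : |clamp B x - clamp B y| ≤ |x - y| := abs_clamp_sub_clamp_le _ _ _
    have h2 : |clamp 1 (x - w t) - clamp 1 (y - w t)| ≤ |x - y| := by
      have := abs_clamp_sub_clamp_le 1 (x - w t) (y - w t)
      have e : x - w t - (y - w t) = x - y := by ring
      rwa [e] at this
    have hcx0 := clamp_nonneg 1 (x - w t); have hcx1 := clamp_le 1 (x - w t) zero_le_one
    have hcy0 := clamp_nonneg 1 (y - w t); have hcy1 := clamp_le 1 (y - w t) zero_le_one
    set a := clamp B x; set b := clamp B y
    set cx := clamp 1 (x - w t); set cy := clamp 1 (y - w t)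
    have e : v t x - v t y = -r * (a - b) + (1/4) * ((cy - cx) * (2 - cx - cy)) := by
      simp only [hv]; ring
    calc |v t x - v t y| ≤ |(-r) * (a - b)| + |(1/4) * ((cy - cx) * (2 - cx - cy))| := by
          rw [e]; exact abs_add_le _ _
      _ = r * |a - b| + (1/4) * (|cy - cx| * |2 - cx - cy|) := by
          rw [abs_mul, abs_mul, abs_mul, abs_neg, abs_of_pos hr, abs_of_pos (by norm_num : (0:ℝ) < 1/4)]
      _ ≤ r * |x - y| + (1/4) * (|x - y| * 2) := by
          have h3 : |2 - cx - cy| ≤ 2 := by rw [abs_le]; constructor <;> linarith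
          have h2' : |cy - cx| ≤ |x - y| := by rwa [abs_sub_comm]
          have := abs_nonneg (cy - cx)
          gcongr
      _ ≤ (r + 1) * |x - y| := by nlinarith [abs_nonneg (x - y)]
  -- continuity in t
  have hcont : ∀ x, ContinuousOn (fun t => v t x) (Icc 0 T) := by
    intro x
    apply ContinuousOn.add continuousOn_const
    apply ContinuousOn.mul continuousOn_const
    apply ContinuousOn.pow
    exact (continuousOn_const.sub (((continuous_clamp 1).comp_continuousOn
      (continuousOn_const.sub hwc))))
  -- bound
  have hbdd : ∀ t x, |v t x| ≤ r * B + 1/4 := by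
    intro t x
    have h1 := clamp_nonneg B x; have h2 := clamp_le B x hB0
    have h3 := clamp_nonneg 1 (x - w t); have h4 := clamp_le 1 (x - w t) zero_le_one
    have h5 := sq_nonneg (1 - clamp 1 (x - w t))
    have h6 : (1 - clamp 1 (x - w t))^2 ≤ 1 := by nlinarith
    rw [abs_le]
    constructor <;> · simp only [hv]; nlinarith
  obtain ⟨f, hf0, hf⟩ := exists_solution_scalar T hT v _ _ hlip hcont hbdd
  have hfc : ContinuousOn f (Icc 0 T) := fun t ht => (hf t ht).continuousWithinAt
  have hd' : ∀ t ∈ Ioo 0 T, HasDerivAt f (v t (f t)) t := fun t ht =>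
    (hf t ⟨le_of_lt ht.1, le_of_lt ht.2⟩).hasDerivAt (Icc_mem_nhds ht.1 ht.2)
  -- f ≥ 0
  have hfpos : ∀ t ∈ Icc 0 T, 0 ≤ f t := by
    apply nonneg_of_deriv T f (fun t => v t (f t)) hfc hd' (by rw [hf0])
    intro t ht hneg
    have hcc : clamp B (f t) = 0 := clamp_of_nonpos (le_of_lt hneg) hB0
    have h5 := sq_nonneg (1 - clamp 1 (f t - w t))
    simp only [hv, hcc]; nlinarith
  -- f ≤ t/4
  have hfle : ∀ t ∈ Icc 0 T, f t ≤ t / 4 := by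
    have hg : ∀ t ∈ Ioo 0 T, HasDerivAt (fun t => t/4 - f t) (1/4 - v t (f t)) t := by
      intro t ht
      exact ((hasDerivAt_id t).div_const 4).sub (hd' t ht)
    have hgpos : ∀ t, 0 ≤ 1/4 - v t (f t) := by
      intro t
      have h1 := clamp_nonneg B (f t)
      have h3 := clamp_nonneg 1 (f t - w t); have h4 := clamp_le 1 (f t - w t) zero_le_one
      simp only [hv]; nlinarith
    have hmono : MonotoneOn (fun t => t/4 - f t) (Icc 0 T) := by
      apply monotoneOn_of_deriv_nonneg (convex_Icc 0 T) (f := fun t => t/4 - f t)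
        (ContinuousOn.sub (by fun_prop) hfc)
      · intro x hx; rw [interior_Icc] at hx
        exact (hg x hx).differentiableAt.differentiableWithinAt
      · intro x hx; rw [interior_Icc] at hx
        rw [(hg x hx).deriv]; exact hgpos x
    intro t ht
    have := hmono (left_mem_Icc.mpr (le_of_lt hT)) ht ht.1
    simp only [hf0] at this
    linarith [this]
  have hclampf : ∀ t ∈ Icc 0 T, clamp B (f t) = f t := fun t ht =>
    clamp_eq_self (hfpos t ht) ((hfle t ht).trans (by rw [hB]; linarith [ht.2]))
  -- Δ ≥ 0
  have hwd' : ∀ t ∈ Ioo 0 T, HasDerivAt w (-r * w t + q t) t := fun t ht =>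
    (hwd t ⟨le_of_lt ht.1, le_of_lt ht.2⟩).hasDerivAt (Icc_mem_nhds ht.1 ht.2)
  have hΔ0 : ∀ t ∈ Icc 0 T, 0 ≤ f t - w t := by
    apply nonneg_of_deriv T (fun t => f t - w t) (fun t => v t (f t) - (-r * w t + q t))
      (hfc.sub hwc)
      (fun t ht => (hd' t ht).sub (hwd' t ht))
      (by rw [hf0, hw0]; norm_num)
    intro t ht hneg
    have htI : t ∈ Icc 0 T := ⟨le_of_lt ht.1, le_of_lt ht.2⟩
    have hc1 : clamp 1 (f t - w t) = 0 := clamp_of_nonpos (le_of_lt hneg) zero_le_one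
    have hcf : clamp B (f t) ≤ w t := by
      have h1 : clamp B (f t) ≤ clamp B (w t) := clamp_mono B (by linarith)
      have h2 : clamp B (w t) = w t := clamp_eq_self (hwb t htI).1
        ((hwb t htI).2.trans (by rw [hB]; linarith [htI.2]))
      linarith [h1, h2.le, h2.ge]
    have hqt := hq t htI
    simp only [hv, hc1]
    nlinarith
  -- Δ ≤ 1
  have hΔ1 : ∀ t ∈ Icc 0 T, f t - w t ≤ 1 := by
    have key : ∀ t ∈ Icc 0 T, 0 ≤ 1 - (f t - w t) := by
      apply nonneg_of_deriv T (fun t => 1 - (f t - w t)) (fun t => -(v t (f t)) + (-r * w t + q t))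
        (continuousOn_const.sub (hfc.sub hwc))
        (fun t ht => by
          have := ((hd' t ht).sub (hwd' t ht)).const_sub 1
          exact this.congr_deriv (by ring))
        (by rw [hf0, hw0]; norm_num)
      intro t ht hneg
      have htI : t ∈ Icc 0 T := ⟨le_of_lt ht.1, le_of_lt ht.2⟩
      have hgt : (1:ℝ) ≤ f t - w t := by linarith
      have hc1 : clamp 1 (f t - w t) = 1 := clamp_of_ge hgt zero_le_one
      have hcf : w t ≤ clamp B (f t) := by
        have h2 : clamp B (w t) = w t := clamp_eq_self (hwb t htI).1
          ((hwb t htI).2.trans (by rw [hB]; linarith [htI.2]))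
        have h1 : clamp B (w t) ≤ clamp B (f t) := clamp_mono B (by linarith)
        linarith [h1, h2.le, h2.ge]
      have hqt := hq t htI
      simp only [hv, hc1]
      nlinarith
    intro t ht; linarith [key t ht]
  -- true ODE
  have hode : ∀ t ∈ Icc 0 T, HasDerivWithinAt f
      (-r * f t + (1/4) * (1 - (f t - w t))^2) (Icc 0 T) t := by
    intro t ht
    have := hf t ht
    have e : v t (f t) = -r * f t + (1/4) * (1 - (f t - w t))^2 := by
      simp only [hv, hclampf t ht, clamp_eq_self (hΔ0 t ht) (hΔ1 t ht)]
    rwa [e] at this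
  refine ⟨f, ⟨hf0, hfc, fun t ht => ⟨hfpos t ht, hfle t ht⟩,
    fun t => (1/4) * (1 - (f t - w t))^2, fun t ht => ?_, hode⟩,
    fun t ht => ⟨hΔ0 t ht, hΔ1 t ht⟩, hode⟩
  have h0 := hΔ0 t ht; have h1 := hΔ1 t ht
  constructor <;> nlinarith


lemma exists_u (T r : ℝ) (hT : 0 < T) (hr : 0 < r) :
    ∃ u : ℕ → ℝ → ℝ,
      (∀ t, u 0 t = 0) ∧
      (∀ k, GoodW T r (u k)) ∧
      (∀ k, ∀ t ∈ Icc 0 T, 0 ≤ u (k+1) t - u k t ∧ u (k+1) t - u k t ≤ 1) ∧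
      (∀ k, ∀ t ∈ Icc 0 T, HasDerivWithinAt (u (k+1))
        (-r * u (k+1) t + (1/4) * (1 - (u (k+1) t - u k t))^2) (Icc 0 T) t) := by
  have step : ∀ p : {w : ℝ → ℝ // GoodW T r w}, {f : ℝ → ℝ // GoodW T r f ∧
      (∀ t ∈ Icc 0 T, 0 ≤ f t - p.1 t ∧ f t - p.1 t ≤ 1) ∧
      (∀ t ∈ Icc 0 T, HasDerivWithinAt f
        (-r * f t + (1/4) * (1 - (f t - p.1 t))^2) (Icc 0 T) t)} := by
    intro p
    exact ⟨(step_V T r hT hr p.1 p.2).choose, (step_V T r hT hr p.1 p.2).choose_spec⟩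
  let seq : ℕ → {w : ℝ → ℝ // GoodW T r w} := fun n =>
    Nat.rec ⟨fun _ => 0, goodW_zero T r⟩ (fun _ p => ⟨(step p).1, (step p).2.1⟩) n
  refine ⟨fun k => (seq k).1, fun t => rfl, fun k => (seq k).2, ?_, ?_⟩
  · exact fun k => (step (seq k)).2.2.1
  · exact fun k => (step (seq k)).2.2.2

/-- Solve the linear ODE `f' = a t * g t - b t * f` with `f 0 = c`, for continuous data. -/
lemma step_m (a b g : ℝ → ℝ) (ha : Continuous a) (hb : Continuous b) (hg : Continuous g)
    (c : ℝ) :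
    ∃ f : ℝ → ℝ, Continuous f ∧ f 0 = c ∧
      ∀ t, HasDerivAt f (a t * g t - b t * f t) t := by
  set Λ : ℝ → ℝ := fun t => ∫ s in (0:ℝ)..t, b s with hΛdef
  have hΛ : ∀ t, HasDerivAt Λ (b t) t := by
    intro t
    exact intervalIntegral.integral_hasDerivAt_right (hb.intervalIntegrable 0 t)
      (hb.stronglyMeasurable.stronglyMeasurableAtFilter) hb.continuousAt
  have hΛc : Continuous Λ :=
    (Differentiable.continuous (fun t => (hΛ t).differentiableAt))
  set E : ℝ → ℝ := fun s => Real.exp (Λ s) * (a s * g s) with hEdef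
  have hEc : Continuous E := ((Real.continuous_exp.comp hΛc).mul (ha.mul hg))
  set I : ℝ → ℝ := fun t => ∫ s in (0:ℝ)..t, E s with hIdef
  have hI : ∀ t, HasDerivAt I (E t) t := fun t =>
    intervalIntegral.integral_hasDerivAt_right (hEc.intervalIntegrable 0 t)
      (hEc.stronglyMeasurable.stronglyMeasurableAtFilter) hEc.continuousAt
  have hIc : Continuous I :=
    (Differentiable.continuous (fun t => (hI t).differentiableAt))
  refine ⟨fun t => Real.exp (-Λ t) * (c + I t), ?_, ?_, ?_⟩
  · exact (Real.continuous_exp.comp hΛc.neg).mul (continuous_const.add hIc)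
  · have h1 : Λ 0 = 0 := by simp [hΛdef]
    have h2 : I 0 = 0 := by simp [hIdef]
    simp [h1, h2]
  · intro t
    have hexp : HasDerivAt (fun t => Real.exp (-Λ t)) (Real.exp (-Λ t) * (-b t)) t :=
      ((hΛ t).neg).exp
    have hmul : HasDerivAt (fun t => Real.exp (-Λ t) * (c + I t))
        (Real.exp (-Λ t) * (-b t) * (c + I t) + Real.exp (-Λ t) * E t) t :=
      hexp.mul ((hI t).const_add c)
    convert hmul using 1
    have hee : Real.exp (-Λ t) * Real.exp (Λ t) = 1 := by
      rw [← Real.exp_add]; simp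
    simp only [hEdef]
    linear_combination (-(a t * g t)) * hee

lemma contDiffOn_of_derivWithin {T : ℝ} (hT : 0 < T) (f D : ℝ → ℝ)
    (hd : ∀ t ∈ Icc (0:ℝ) T, HasDerivWithinAt f (D t) (Icc 0 T) t)
    (hD : ContinuousOn D (Icc 0 T)) :
    ContDiffOn ℝ 1 f (Icc 0 T) := by
  have hu : UniqueDiffOn ℝ (Icc (0:ℝ) T) := uniqueDiffOn_Icc hT
  rw [show (1 : WithTop ℕ∞) = 0 + 1 from rfl, contDiffOn_succ_iff_derivWithin hu]
  refine ⟨fun t ht => (hd t ht).differentiableWithinAt, by simp, ?_⟩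
  rw [contDiffOn_zero]
  exact hD.congr (fun t ht => (hd t ht).derivWithin (hu t ht))


lemma exists_sol (K : ℕ) (hK : 1 ≤ K) (T r : ℝ) (hT : 0 < T) (hr : 0 < r) (M : ℕ → ℝ) :
    ∃ V m : ℕ → ℝ → ℝ, IsHJBKolSolution K T r 0 M V m := by
  classical
  obtain ⟨u, hu0, hug, huΔ, hud⟩ := exists_u T r hT hr
  have hcT : ∀ s : ℝ, clamp T s ∈ Icc (0:ℝ) T :=
    fun s => ⟨clamp_nonneg _ _, clamp_le _ _ (le_of_lt hT)⟩
  set V : ℕ → ℝ → ℝ := fun k t => u k (clamp T (T - t)) with hV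
  have hVcont : ∀ k, Continuous (V k) := fun k =>
    ((hug k).2.1.comp_continuous ((continuous_clamp T).comp (continuous_const.sub continuous_id))
      (fun t => hcT _))
  have hVeq : ∀ k, ∀ t ∈ Icc (0:ℝ) T, V k t = u k (T - t) := by
    intro k t ht
    simp only [hV]
    rw [clamp_eq_self (by linarith [ht.2]) (by linarith [ht.1])]
  have hV0 : ∀ t, V 0 t = 0 := fun t => hu0 _
  have hVT : ∀ k, V k T = 0 := by
    intro k
    simp only [hV, sub_self]
    rw [clamp_eq_self le_rfl (le_of_lt hT), (hug k).1]
  have hΔV : ∀ k t, 0 ≤ V (k+1) t - V k t ∧ V (k+1) t - V k t ≤ 1 :=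
    fun k t => huΔ k _ (hcT _)
  have hVd : ∀ k, ∀ t ∈ Icc (0:ℝ) T, HasDerivWithinAt (V (k+1))
      (r * V (k+1) t - (1/4) * (1 - (V (k+1) t - V k t))^2) (Icc 0 T) t := by
    intro k t ht
    have hTt : T - t ∈ Icc (0:ℝ) T := ⟨by linarith [ht.2], by linarith [ht.1]⟩
    have h1 := hud k (T - t) hTt
    have h2 := reverse_hasDerivWithinAt ht h1
    have h3 : HasDerivWithinAt (V (k+1))
        ((-r * u (k+1) (T - t) + (1/4) * (1 - (u (k+1) (T - t) - u k (T - t)))^2) * (-1))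
        (Icc 0 T) t :=
      h2.congr (fun s hs => hVeq (k+1) s hs) (hVeq (k+1) t ht)
    convert h3 using 1
    rw [hVeq (k+1) t ht, hVeq k t ht]
    ring
  have hVcd : ∀ k, 1 ≤ k → k ≤ K → ContDiffOn ℝ 1 (V k) (Icc 0 T) := by
    intro k h1 _
    obtain ⟨j, rfl⟩ : ∃ j, k = j + 1 := ⟨k - 1, by omega⟩
    exact contDiffOn_of_derivWithin hT _ _ (hVd j)
      (Continuous.continuousOn (by
        exact (continuous_const.mul (hVcont (j+1))).sub
          (continuous_const.mul ((continuous_const.sub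
            ((hVcont (j+1)).sub (hVcont j))).pow 2))))
  -- the intensity functions
  set lam : ℕ → ℝ → ℝ :=
    fun k t => if 1 ≤ k ∧ k ≤ K then (1/2) * (1 - (V k t - V (k-1) t)) else 0 with hlam
  have hlamc : ∀ k, Continuous (lam k) := by
    intro k
    by_cases h : 1 ≤ k ∧ k ≤ K
    · simp only [hlam, if_pos h]
      exact continuous_const.mul (continuous_const.sub ((hVcont k).sub (hVcont (k-1))))
    · simp only [hlam, if_neg h]
      exact continuous_const
  have hlam_top : ∀ t, lam (K+1) t = 0 := by
    intro t; simp only [hlam]; rw [if_neg (by omega)]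
  have hlam0 : ∀ t, lam 0 t = 0 := by
    intro t; simp only [hlam]; rw [if_neg (by omega)]
  -- construct m by downward recursion
  have stepm' : ∀ (k : ℕ) (p : {h : ℝ → ℝ // Continuous h}), {f : ℝ → ℝ // Continuous f ∧
      f 0 = M k ∧ ∀ t, HasDerivAt f (lam (k+1) t * p.1 t - lam k t * f t) t} := by
    intro k p
    have h := step_m (lam (k+1)) (lam k) p.1 (hlamc _) (hlamc _) p.2 (M k)
    exact ⟨h.choose, h.choose_spec⟩
  set p0 : {h : ℝ → ℝ // Continuous h} := ⟨fun _ => 0, continuous_const⟩ with hp0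
  let mseq : ℕ → {h : ℝ → ℝ // Continuous h} := fun n =>
    Nat.rec ⟨(stepm' K p0).1, (stepm' K p0).2.1⟩
      (fun j p => ⟨(stepm' (K - (j+1)) p).1, (stepm' (K - (j+1)) p).2.1⟩) n
  have hm0' : ∀ j, (mseq j).1 0 = M (K - j) := by
    intro j
    cases j with
    | zero => exact (stepm' K p0).2.2.1
    | succ i => exact (stepm' (K - (i+1)) (mseq i)).2.2.1
  have hmdsucc : ∀ j t, HasDerivAt (mseq (j+1)).1
      (lam (K - (j+1) + 1) t * (mseq j).1 t - lam (K - (j+1)) t * (mseq (j+1)).1 t) t :=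
    fun j t => (stepm' (K - (j+1)) (mseq j)).2.2.2 t
  have hmd0 : ∀ t, HasDerivAt (mseq 0).1
      (lam (K+1) t * (0:ℝ) - lam K t * (mseq 0).1 t) t :=
    fun t => (stepm' K p0).2.2.2 t
  set m : ℕ → ℝ → ℝ := fun k => (mseq (K - k)).1 with hm
  have hmcont : ∀ k, Continuous (m k) := fun k => (mseq (K - k)).2
  -- uniform derivative statement
  have hmderiv : ∀ k, k ≤ K → ∀ t, HasDerivAt (m k)
      (lam (k+1) t * m (k+1) t - lam k t * m k t) t := by
    intro k hk t
    by_cases hkK : k = K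
    · rw [hkK]
      have h := hmd0 t
      have e0 : K - K = 0 := Nat.sub_self K
      have e1 : K - (K+1) = 0 := by omega
      simp only [hm, e0, e1]
      simpa [hlam_top] using h
    · have hklt : k < K := lt_of_le_of_ne hk hkK
      have e1 : K - k - 1 + 1 = K - k := by omega
      have h := hmdsucc (K - k - 1) t
      rw [e1] at h
      have e2 : K - (K - k) = k := by omega
      have e3 : K - k - 1 = K - (k+1) := by omega
      rw [e2, e3] at h
      exact h
  have hmic : ∀ k, k ≤ K → m k 0 = M k := by
    intro k hk
    have := hm0' (K - k)
    have e2 : K - (K - k) = k := by omega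
    rw [e2] at this
    exact this
  -- marketLam with ε = 0 equals lam
  have hmarket : ∀ k, 1 ≤ k → k ≤ K → ∀ t,
      marketLam K 0 V m k t = lam k t := by
    intro k h1 h2 t
    simp only [marketLam, zero_mul, add_zero, hlam, if_pos (And.intro h1 h2)]
  have hUD : UniqueDiffOn ℝ (Icc (0:ℝ) T) := uniqueDiffOn_Icc hT
  refine ⟨V, m, hV0, hVcd, ?_, ?_, ?_, ?_, ?_, fun k _ _ => hVT k, hmic⟩
  · -- ContDiffOn m
    intro k hk
    apply ContDiff.contDiffOn
    rw [contDiff_one_iff_deriv]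
    constructor
    · exact fun t => (hmderiv k hk t).differentiableAt
    · have : deriv (m k) = fun t => lam (k+1) t * m (k+1) t - lam k t * m k t :=
        funext fun t => (hmderiv k hk t).deriv
      rw [this]
      exact ((hlamc _).mul (hmcont _)).sub ((hlamc _).mul (hmcont _))
  · -- HJB equations
    intro k h1 h2 t ht
    obtain ⟨j, rfl⟩ : ∃ j, k = j + 1 := ⟨k - 1, by omega⟩
    rw [(hVd j t ht).derivWithin (hUD t ht)]
    simp only [zero_mul, add_zero, Nat.add_sub_cancel]
    ring
  · -- Kolmogorov, k = 0
    intro t ht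
    rw [((hmderiv 0 (by omega) t).hasDerivWithinAt.derivWithin (hUD t ht)),
      hmarket 1 le_rfl hK t, hlam0 t]
    ring
  · -- Kolmogorov, middle
    intro k h1 h2 t ht
    have hk : k ≤ K := by omega
    have hk1 : k + 1 ≤ K := by omega
    rw [((hmderiv k hk t).hasDerivWithinAt.derivWithin (hUD t ht)),
      hmarket (k+1) (by omega) hk1 t, hmarket k h1 hk t]
  · -- Kolmogorov, k = K
    intro t ht
    rw [((hmderiv K le_rfl t).hasDerivWithinAt.derivWithin (hUD t ht)),
      hmarket K hK le_rfl t, hlam_top t]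
    ring

end HJBK

/-- **Existence and uniqueness for `ε = 0`.** The decoupled (`ε = 0`) HJB–Kolmogorov system
has exactly one solution on `[0, T]`. -/
theorem existsUnique_solution_of_no_interaction
    (K : ℕ) (hK : 1 ≤ K) (T r : ℝ) (hT : 0 < T) (hr : 0 < r)
    (M : ℕ → ℝ) (hM : ∀ k, k ≤ K → 0 ≤ M k)
    (hMsum : ∑ k ∈ Finset.Icc 0 K, M k = 1) :
    (∃ V m : ℕ → ℝ → ℝ, IsHJBKolSolution K T r 0 M V m) ∧
    (∀ V₁ m₁ V₂ m₂ : ℕ → ℝ → ℝ,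
      IsHJBKolSolution K T r 0 M V₁ m₁ → IsHJBKolSolution K T r 0 M V₂ m₂ →
      (∀ k, 1 ≤ k → k ≤ K → ∀ t ∈ Set.Icc (0 : ℝ) T, V₁ k t = V₂ k t) ∧
      (∀ k, k ≤ K → ∀ t ∈ Set.Icc (0 : ℝ) T, m₁ k t = m₂ k t)) := by
  constructor
  · exact HJBK.exists_sol K hK T r hT hr M
  intro V₁ m₁ V₂ m₂ h₁ h₂
  obtain ⟨h₁V0, h₁Vcd, h₁mcd, h₁hjb, h₁k0, h₁kmid, h₁kK, h₁VT, h₁m0⟩ := h₁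
  obtain ⟨h₂V0, h₂Vcd, h₂mcd, h₂hjb, h₂k0, h₂kmid, h₂kK, h₂VT, h₂m0⟩ := h₂
  have hUD : UniqueDiffOn ℝ (Set.Icc (0:ℝ) T) := uniqueDiffOn_Icc hT
  have hVcont₁ : ∀ j, j ≤ K → ContinuousOn (V₁ j) (Set.Icc 0 T) := by
    intro j hj
    rcases Nat.eq_zero_or_pos j with h | h
    · subst h; exact continuousOn_const.congr (fun t _ => h₁V0 t)
    · exact (h₁Vcd j h hj).continuousOn
  have hVcont₂ : ∀ j, j ≤ K → ContinuousOn (V₂ j) (Set.Icc 0 T) := by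
    intro j hj
    rcases Nat.eq_zero_or_pos j with h | h
    · subst h; exact continuousOn_const.congr (fun t _ => h₂V0 t)
    · exact (h₂Vcd j h hj).continuousOn
  -- uniqueness of V, by induction
  have hVuniq : ∀ k, k ≤ K → ∀ t ∈ Set.Icc (0:ℝ) T, V₁ k t = V₂ k t := by
    intro k
    induction k with
    | zero => intro _ t _; rw [h₁V0, h₂V0]
    | succ j ih =>
      intro hk t₀ ht₀
      have hj : j ≤ K := by omega
      have ihj := ih hj
      have h1k : 1 ≤ j + 1 := by omega
      -- derivWithin formulas from the HJB equations
      have hD₁ : ∀ t ∈ Set.Icc (0:ℝ) T, derivWithin (V₁ (j+1)) (Set.Icc 0 T) t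
          = r * V₁ (j+1) t - (1/4) * (1 - (V₁ (j+1) t - V₁ j t))^2 := by
        intro t ht
        have := h₁hjb (j+1) h1k hk t ht
        simp only [zero_mul, add_zero, Nat.add_sub_cancel] at this
        linarith
      have hD₂ : ∀ t ∈ Set.Icc (0:ℝ) T, derivWithin (V₂ (j+1)) (Set.Icc 0 T) t
          = r * V₂ (j+1) t - (1/4) * (1 - (V₂ (j+1) t - V₂ j t))^2 := by
        intro t ht
        have := h₂hjb (j+1) h1k hk t ht
        simp only [zero_mul, add_zero, Nat.add_sub_cancel] at this
        linarith
      have hd₁ : ∀ t ∈ Set.Icc (0:ℝ) T,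
          HasDerivWithinAt (V₁ (j+1)) (derivWithin (V₁ (j+1)) (Set.Icc 0 T) t) (Set.Icc 0 T) t :=
        fun t ht => (((h₁Vcd (j+1) h1k hk).differentiableOn one_ne_zero) t ht).hasDerivWithinAt
      have hd₂ : ∀ t ∈ Set.Icc (0:ℝ) T,
          HasDerivWithinAt (V₂ (j+1)) (derivWithin (V₂ (j+1)) (Set.Icc 0 T) t) (Set.Icc 0 T) t :=
        fun t ht => (((h₂Vcd (j+1) h1k hk).differentiableOn one_ne_zero) t ht).hasDerivWithinAt
      -- bounds
      obtain ⟨Ca, hCa⟩ := isCompact_Icc.exists_bound_of_continuousOn (hVcont₁ (j+1) hk)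
      obtain ⟨Cb, hCb⟩ := isCompact_Icc.exists_bound_of_continuousOn (hVcont₂ (j+1) hk)
      obtain ⟨Cc, hCc⟩ := isCompact_Icc.exists_bound_of_continuousOn (hVcont₁ j hj)
      set L : ℝ := r + (2 + Ca + Cb + 2*Cc)/4 with hL
      set d : ℝ → ℝ := fun s => V₁ (j+1) (T - s) - V₂ (j+1) (T - s) with hd
      have hmapsTo : ∀ s ∈ Set.Icc (0:ℝ) T, T - s ∈ Set.Icc (0:ℝ) T :=
        fun s hs => ⟨by linarith [hs.2], by linarith [hs.1]⟩
      have hdc : ContinuousOn d (Set.Icc 0 T) := by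
        have hrev : ContinuousOn (fun s : ℝ => T - s) (Set.Icc (0:ℝ) T) :=
          (continuous_const.sub continuous_id).continuousOn
        exact ((hVcont₁ (j+1) hk).comp hrev hmapsTo).sub ((hVcont₂ (j+1) hk).comp hrev hmapsTo)
      have hdd : ∀ s ∈ Set.Ico (0:ℝ) T, HasDerivWithinAt d
          ((derivWithin (V₁ (j+1)) (Set.Icc 0 T) (T - s)) * (-1)
            - (derivWithin (V₂ (j+1)) (Set.Icc 0 T) (T - s)) * (-1)) (Set.Icc 0 T) s := by
        intro s hs
        have hsI : s ∈ Set.Icc (0:ℝ) T := ⟨hs.1, le_of_lt hs.2⟩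
        exact (HJBK.reverse_hasDerivWithinAt hsI (hd₁ (T - s) (hmapsTo s hsI))).sub
          (HJBK.reverse_hasDerivWithinAt hsI (hd₂ (T - s) (hmapsTo s hsI)))
      have hd0 : d 0 = 0 := by
        simp only [hd, sub_zero]
        rw [h₁VT (j+1) h1k hk, h₂VT (j+1) h1k hk]
        ring
      have hbound : ∀ s ∈ Set.Ico (0:ℝ) T,
          |(derivWithin (V₁ (j+1)) (Set.Icc 0 T) (T - s)) * (-1)
            - (derivWithin (V₂ (j+1)) (Set.Icc 0 T) (T - s)) * (-1)| ≤ L * |d s| := by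
        intro s hs
        have hsI : s ∈ Set.Icc (0:ℝ) T := ⟨hs.1, le_of_lt hs.2⟩
        have htI : T - s ∈ Set.Icc (0:ℝ) T := hmapsTo s hsI
        set x := V₁ (j+1) (T - s)
        set y := V₂ (j+1) (T - s)
        set w := V₁ j (T - s)
        have hw2 : V₂ j (T - s) = w := (ihj (T - s) htI).symm
        have e : (derivWithin (V₁ (j+1)) (Set.Icc 0 T) (T - s)) * (-1)
            - (derivWithin (V₂ (j+1)) (Set.Icc 0 T) (T - s)) * (-1)
            = -((x - y) * (r + (2 - x - y + 2*w)/4)) := by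
          rw [hD₁ (T - s) htI, hD₂ (T - s) htI, hw2]
          ring
        rw [e, abs_neg, abs_mul]
        have hx := hCa (T - s) htI
        have hy := hCb (T - s) htI
        have hww := hCc (T - s) htI
        rw [Real.norm_eq_abs] at hx hy hww
        have hx' := abs_le.mp hx
        have hy' := abs_le.mp hy
        have hw' := abs_le.mp hww
        have habs : |r + (2 - x - y + 2*w)/4| ≤ L := by
          rw [abs_le]
          constructor
          · rw [hL]; nlinarith [abs_nonneg x]
          · rw [hL]; nlinarith [abs_nonneg x]
        calc |x - y| * |r + (2 - x - y + 2*w)/4| ≤ |x - y| * L :=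
              mul_le_mul_of_nonneg_left habs (abs_nonneg _)
          _ = L * |d s| := by rw [mul_comm]
      have hzero := HJBK.eq_zero_of_abs_deriv_le T L d _ hdc hdd hd0 hbound
      have := hzero (T - t₀) (hmapsTo t₀ ht₀)
      simp only [hd] at this
      rw [show T - (T - t₀) = t₀ by ring] at this
      linarith
  -- lam agreement and bounds
  have hlameq : ∀ k, 1 ≤ k → k ≤ K → ∀ t ∈ Set.Icc (0:ℝ) T,
      marketLam K 0 V₂ m₂ k t = marketLam K 0 V₁ m₁ k t := by
    intro k hk1 hk2 t ht
    simp only [marketLam, zero_mul, add_zero]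
    rw [hVuniq k hk2 t ht, hVuniq (k-1) (by omega) t ht]
  have hlamcont : ∀ k, 1 ≤ k → k ≤ K →
      ContinuousOn (fun t => marketLam K 0 V₁ m₁ k t) (Set.Icc 0 T) := by
    intro k hk1 hk2
    simp only [marketLam, zero_mul, add_zero]
    exact continuousOn_const.mul
      (continuousOn_const.sub ((hVcont₁ k hk2).sub (hVcont₁ (k-1) (by omega))))
  -- uniqueness of m, by downward induction
  have hmD : ∀ k, k ≤ K → (∀ t ∈ Set.Icc (0:ℝ) T,
      HasDerivWithinAt (m₁ k) (derivWithin (m₁ k) (Set.Icc 0 T) t) (Set.Icc 0 T) t) := by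
    intro k hk t ht
    exact (((h₁mcd k hk).differentiableOn one_ne_zero) t ht).hasDerivWithinAt
  have hmD₂ : ∀ k, k ≤ K → (∀ t ∈ Set.Icc (0:ℝ) T,
      HasDerivWithinAt (m₂ k) (derivWithin (m₂ k) (Set.Icc 0 T) t) (Set.Icc 0 T) t) := by
    intro k hk t ht
    exact (((h₂mcd k hk).differentiableOn one_ne_zero) t ht).hasDerivWithinAt
  have hmain : ∀ j k, k ≤ K → K ≤ k + j → ∀ t ∈ Set.Icc (0:ℝ) T, m₁ k t = m₂ k t := by
    intro j
    induction j with
    | zero =>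
      intro k hk hK' t ht
      obtain rfl : K = k := by omega
      obtain ⟨CK, hCK⟩ := isCompact_Icc.exists_bound_of_continuousOn (hlamcont K hK le_rfl)
      set e : ℝ → ℝ := fun t => m₁ K t - m₂ K t with he
      have hec : ContinuousOn e (Set.Icc 0 T) :=
        ((h₁mcd K le_rfl).continuousOn).sub ((h₂mcd K le_rfl).continuousOn)
      have hed : ∀ s ∈ Set.Ico (0:ℝ) T, HasDerivWithinAt e
          (derivWithin (m₁ K) (Set.Icc 0 T) s - derivWithin (m₂ K) (Set.Icc 0 T) s)
          (Set.Icc 0 T) s := by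
        intro s hs
        have hsI : s ∈ Set.Icc (0:ℝ) T := ⟨hs.1, le_of_lt hs.2⟩
        exact (hmD K le_rfl s hsI).sub (hmD₂ K le_rfl s hsI)
      have he0 : e 0 = 0 := by
        simp only [he]
        rw [h₁m0 K le_rfl, h₂m0 K le_rfl]
        ring
      have hbound : ∀ s ∈ Set.Ico (0:ℝ) T,
          |derivWithin (m₁ K) (Set.Icc 0 T) s - derivWithin (m₂ K) (Set.Icc 0 T) s|
            ≤ CK * |e s| := by
        intro s hs
        have hsI : s ∈ Set.Icc (0:ℝ) T := ⟨hs.1, le_of_lt hs.2⟩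
        rw [h₁kK s hsI, h₂kK s hsI, hlameq K hK le_rfl s hsI]
        have eeq : -(marketLam K 0 V₁ m₁ K s) * m₁ K s - -(marketLam K 0 V₁ m₁ K s) * m₂ K s
            = -(marketLam K 0 V₁ m₁ K s * e s) := by simp only [he]; ring
        rw [eeq, abs_neg, abs_mul]
        have := hCK s hsI
        rw [Real.norm_eq_abs] at this
        exact mul_le_mul_of_nonneg_right this (abs_nonneg _)
      have hzero := HJBK.eq_zero_of_abs_deriv_le T CK e _ hec hed he0 hbound
      have := hzero t ht
      simp only [he] at this
      linarith
    | succ i ih =>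
      intro k hk hK' t ht
      by_cases hcase : K ≤ k + i
      · exact ih k hk hcase t ht
      have hkK : k + i + 1 = K := by omega
      have hklt : k < K := by omega
      have ih1 : ∀ t ∈ Set.Icc (0:ℝ) T, m₁ (k+1) t = m₂ (k+1) t :=
        ih (k+1) (by omega) (by omega)
      set e : ℝ → ℝ := fun t => m₁ k t - m₂ k t with he
      have hec : ContinuousOn e (Set.Icc 0 T) :=
        ((h₁mcd k hk).continuousOn).sub ((h₂mcd k hk).continuousOn)
      have hed : ∀ s ∈ Set.Ico (0:ℝ) T, HasDerivWithinAt e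
          (derivWithin (m₁ k) (Set.Icc 0 T) s - derivWithin (m₂ k) (Set.Icc 0 T) s)
          (Set.Icc 0 T) s := by
        intro s hs
        have hsI : s ∈ Set.Icc (0:ℝ) T := ⟨hs.1, le_of_lt hs.2⟩
        exact (hmD k hk s hsI).sub (hmD₂ k hk s hsI)
      have he0 : e 0 = 0 := by
        simp only [he]
        rw [h₁m0 k hk, h₂m0 k hk]
        ring
      rcases Nat.eq_zero_or_pos k with hk0 | hkpos
      · -- k = 0
        subst hk0
        have hbound : ∀ s ∈ Set.Ico (0:ℝ) T,
            |derivWithin (m₁ 0) (Set.Icc 0 T) s - derivWithin (m₂ 0) (Set.Icc 0 T) s|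
              ≤ 0 * |e s| := by
          intro s hs
          have hsI : s ∈ Set.Icc (0:ℝ) T := ⟨hs.1, le_of_lt hs.2⟩
          rw [h₁k0 s hsI, h₂k0 s hsI, hlameq 1 le_rfl hK s hsI, ih1 s hsI]
          simp
        have hzero := HJBK.eq_zero_of_abs_deriv_le T 0 e _ hec hed he0 hbound
        have := hzero t ht
        simp only [he] at this
        linarith
      · -- 1 ≤ k ≤ K - 1
        have hkle : k ≤ K - 1 := by omega
        obtain ⟨Ck, hCk⟩ := isCompact_Icc.exists_bound_of_continuousOn
          (hlamcont k hkpos (by omega))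
        have hbound : ∀ s ∈ Set.Ico (0:ℝ) T,
            |derivWithin (m₁ k) (Set.Icc 0 T) s - derivWithin (m₂ k) (Set.Icc 0 T) s|
              ≤ Ck * |e s| := by
          intro s hs
          have hsI : s ∈ Set.Icc (0:ℝ) T := ⟨hs.1, le_of_lt hs.2⟩
          rw [h₁kmid k hkpos hkle s hsI, h₂kmid k hkpos hkle s hsI,
            hlameq k hkpos (by omega) s hsI, hlameq (k+1) (by omega) (by omega) s hsI,
            ih1 s hsI]
          have eeq : marketLam K 0 V₁ m₁ (k+1) s * m₂ (k+1) s - marketLam K 0 V₁ m₁ k s * m₁ k s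
              - (marketLam K 0 V₁ m₁ (k+1) s * m₂ (k+1) s - marketLam K 0 V₁ m₁ k s * m₂ k s)
              = -(marketLam K 0 V₁ m₁ k s * e s) := by simp only [he]; ring
          rw [eeq, abs_neg, abs_mul]
          have := hCk s hsI
          rw [Real.norm_eq_abs] at this
          exact mul_le_mul_of_nonneg_right this (abs_nonneg _)
        have hzero := HJBK.eq_zero_of_abs_deriv_le T Ck e _ hec hed he0 hbound
        have := hzero t ht
        simp only [he] at this
        linarith
  constructor
  · intro k _ hk t ht
    exact hVuniq k hk t ht
  · intro k hk t ht
    exact hmain K k hk (by omega) t ht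
end
end

section
/- Let (V^{(0)}, m^{(0)}) be the solution of the HJB–Kolmogorov system with ε = 0, and set ρ := √(r² + r) − r. Then for every k ∈ {1,…,K} and every t ∈ [0,T]: 0 ≤ ΔV^{(0)}_k(t) ≤ 1 − 2ρ < 1, and the function t ↦ ΔV^{(0)}_k(t) is nonincreasing on [0,T] (its derivative is ≤ 0). -/
noncomputable section

open Set


/-- One-sided Gronwall/invariance: if `F b ≤ 0` and wherever `F ≥ 0` (in the interior)
`F' ≥ -L·F`, then `F ≤ 0` on `[a,b]`. -/
lemma gron_nonpos {a b L : ℝ} {F : ℝ → ℝ}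
    (hF : ContinuousOn F (Set.Icc a b))
    (hd : ∀ t ∈ Set.Ioo a b, 0 ≤ F t → ∃ d, HasDerivAt F d t ∧ -L * F t ≤ d)
    (hFb : F b ≤ 0) : ∀ t ∈ Set.Icc a b, F t ≤ 0 := by
  intro t ht
  by_contra hpos
  push_neg at hpos
  have htb : t ≤ b := ht.2
  have hta : a ≤ t := ht.1
  -- the set where F ≤ 0 after t
  set S : Set ℝ := Set.Icc t b ∩ F ⁻¹' (Set.Iic 0) with hS
  have hSclosed : IsClosed S :=
    ContinuousOn.preimage_isClosed_of_isClosed (hF.mono (Icc_subset_Icc hta le_rfl))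
      isClosed_Icc isClosed_Iic
  have hSne : S.Nonempty := ⟨b, ⟨htb, le_rfl⟩, hFb⟩
  have hSbdd : BddBelow S := ⟨t, fun x hx => hx.1.1⟩
  set t1 := sInf S with ht1def
  have ht1S : t1 ∈ S := hSclosed.csInf_mem hSne hSbdd
  have ht1t : t ≤ t1 := ht1S.1.1
  have ht1b : t1 ≤ b := ht1S.1.2
  have htlt : t < t1 := by
    rcases lt_or_eq_of_le ht1t with h | h
    · exact h
    · exact absurd ht1S.2 (by simp [← h]; linarith)
  have hFpos : ∀ x ∈ Set.Ico t t1, 0 < F x := by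
    intro x hx
    by_contra hx'
    push_neg at hx'
    have hxS : x ∈ S := ⟨⟨hx.1, le_trans hx.2.le ht1b⟩, hx'⟩
    exact absurd (csInf_le hSbdd hxS) (not_le.mpr hx.2)
  -- monotonicity of G = F * exp(L·) on [t, t1]
  set G : ℝ → ℝ := fun s => F s * Real.exp (L * s) with hG
  have hGmono : MonotoneOn G (Set.Icc t t1) := by
    apply monotoneOn_of_deriv_nonneg (convex_Icc t t1)
    · exact ((hF.mono (Icc_subset_Icc hta ht1b)).mul
        (Real.continuous_exp.comp (continuous_const.mul continuous_id)).continuousOn)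
    · intro x hx
      rw [interior_Icc] at hx
      have hxI : x ∈ Set.Ioo a b := ⟨lt_of_le_of_lt hta hx.1, lt_of_lt_of_le hx.2 ht1b⟩
      obtain ⟨d, hdd, -⟩ := hd x hxI (hFpos x ⟨hx.1.le, hx.2⟩).le
      exact ((hdd.mul ((Real.hasDerivAt_exp (L*x)).comp x
        (by simpa using (hasDerivAt_id x).const_mul L))).differentiableAt).differentiableWithinAt
    · intro x hx
      rw [interior_Icc] at hx
      have hxI : x ∈ Set.Ioo a b := ⟨lt_of_le_of_lt hta hx.1, lt_of_lt_of_le hx.2 ht1b⟩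
      have hFx : 0 ≤ F x := (hFpos x ⟨hx.1.le, hx.2⟩).le
      obtain ⟨d, hdd, hdge⟩ := hd x hxI hFx
      have hexp : HasDerivAt (fun s => Real.exp (L * s)) (Real.exp (L * x) * L) x :=
        (Real.hasDerivAt_exp (L*x)).comp x (by simpa using (hasDerivAt_id x).const_mul L)
      have : deriv G x = d * Real.exp (L * x) + F x * (Real.exp (L * x) * L) :=
        (hdd.mul hexp).deriv
      rw [this]
      have h1 : -L * F x * Real.exp (L * x) ≤ d * Real.exp (L * x) :=
        mul_le_mul_of_nonneg_right hdge (Real.exp_pos _).le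
      nlinarith [Real.exp_pos (L * x)]
  have h1 : G t ≤ G t1 := hGmono ⟨le_rfl, htlt.le⟩ ⟨htlt.le, le_rfl⟩ htlt.le
  have h2 : 0 < G t := mul_pos hpos (Real.exp_pos _)
  have h3 : G t1 ≤ 0 := mul_nonpos_of_nonpos_of_nonneg ht1S.2 (Real.exp_pos _).le
  linarith


lemma anti_of_derivWithin_nonpos {a b : ℝ} {f : ℝ → ℝ}
    (hc : ContinuousOn f (Set.Icc a b))
    (hd : ∀ t ∈ Set.Icc a b, DifferentiableWithinAt ℝ f (Set.Icc a b) t)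
    (h0 : ∀ t ∈ Set.Icc a b, derivWithin f (Set.Icc a b) t ≤ 0) :
    AntitoneOn f (Set.Icc a b) := by
  apply antitoneOn_of_deriv_nonpos (convex_Icc a b) hc
  · intro x hx
    rw [interior_Icc] at hx
    exact (((hd x (Ioo_subset_Icc_self hx)).differentiableAt
      (Icc_mem_nhds hx.1 hx.2))).differentiableWithinAt
  · intro x hx
    rw [interior_Icc] at hx
    have hmem := Icc_mem_nhds hx.1 hx.2
    have h := ((hd x (Ioo_subset_Icc_self hx)).hasDerivWithinAt).hasDerivAt hmem
    rw [h.deriv]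
    exact h0 x (Ioo_subset_Icc_self hx)

lemma core_ode {T r w : ℝ} (hT : 0 < T) (hr : 0 < r) (hw : 0 < w) (hw1 : w < 1)
    (hrw : 4 * (r * w) = (1 - w)^2)
    {g q : ℝ → ℝ}
    (hgc : ContinuousOn g (Set.Icc 0 T))
    (hgd : ∀ t ∈ Set.Icc 0 T, DifferentiableWithinAt ℝ g (Set.Icc 0 T) t)
    (hqc : ContinuousOn q (Set.Icc 0 T))
    (hqd : ∀ t ∈ Set.Icc 0 T, DifferentiableWithinAt ℝ q (Set.Icc 0 T) t)
    (hq0 : ∀ t ∈ Set.Icc 0 T, 0 ≤ q t)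
    (hq' : ∀ t ∈ Set.Icc 0 T, 0 ≤ derivWithin q (Set.Icc 0 T) t)
    (hqT : q T ≤ 1/4)
    (hgT : g T = 0)
    (hode : ∀ t ∈ Set.Icc 0 T, derivWithin g (Set.Icc 0 T) t
      = r * g t - (1/4) * (1 - g t)^2 + q t) :
    (∀ t ∈ Set.Icc 0 T, 0 ≤ g t ∧ g t ≤ w) ∧
    (∀ t ∈ Set.Icc 0 T, derivWithin g (Set.Icc 0 T) t ≤ 0) ∧
    AntitoneOn g (Set.Icc 0 T) := by
  have hTmem : T ∈ Set.Icc (0:ℝ) T := ⟨hT.le, le_rfl⟩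
  obtain ⟨B, hB⟩ := isCompact_Icc.exists_bound_of_continuousOn hgc
  have hgB : ∀ t ∈ Set.Icc (0:ℝ) T, g t ≤ B := by
    intro t ht
    have := hB t ht
    rw [Real.norm_eq_abs] at this
    exact (abs_le.mp this).2
  set p : ℝ → ℝ := fun t => r * g t - (1/4) * (1 - g t)^2 + q t with hp
  have hpg : ∀ t ∈ Set.Icc (0:ℝ) T, HasDerivWithinAt g (p t) (Set.Icc 0 T) t := by
    intro t ht
    have h := (hgd t ht).hasDerivWithinAt
    rwa [hode t ht] at h
  have hpc : ContinuousOn p (Set.Icc 0 T) :=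
    ((continuousOn_const.mul hgc).sub
      (continuousOn_const.mul ((continuousOn_const.sub hgc).pow 2))).add hqc
  have hpder : ∀ t ∈ Set.Icc (0:ℝ) T, HasDerivWithinAt p
      ((r + (1/2) * (1 - g t)) * p t + derivWithin q (Set.Icc 0 T) t) (Set.Icc 0 T) t := by
    intro t ht
    have hg := hpg t ht
    have hq := (hqd t ht).hasDerivWithinAt
    have h2 : HasDerivWithinAt (fun s => (1 - g s)^2)
        ((2:ℕ) * (1 - g t)^(2-1) * (-(p t))) (Set.Icc 0 T) t := (hg.const_sub 1).pow 2
    have h := ((hg.const_mul r).sub (h2.const_mul (1/4))).add hq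
    refine h.congr_deriv ?_
    push_cast
    ring
  have hpT : p T ≤ 0 := by
    simp only [hp, hgT]
    norm_num
    linarith
  -- p ≤ 0 on [0,T]
  have hple : ∀ t ∈ Set.Icc (0:ℝ) T, p t ≤ 0 := by
    apply gron_nonpos (L := r + (1/2)*(1+B)) hpc _ hpT
    intro x hx hFx
    have hxI : x ∈ Set.Icc (0:ℝ) T := Ioo_subset_Icc_self hx
    refine ⟨_, (hpder x hxI).hasDerivAt (Icc_mem_nhds hx.1 hx.2), ?_⟩
    have h1 := hq' x hxI
    have h2 := hgB x hxI
    have hco : 0 ≤ (2*r + 1 + (1/2)*(B - g x)) * p x :=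
      mul_nonneg (by linarith) hFx
    nlinarith [hco, h1]
  have hder : ∀ t ∈ Set.Icc (0:ℝ) T, derivWithin g (Set.Icc 0 T) t ≤ 0 := by
    intro t ht
    rw [hode t ht]
    exact hple t ht
  have hanti : AntitoneOn g (Set.Icc 0 T) := anti_of_derivWithin_nonpos hgc hgd hder
  have hlow : ∀ t ∈ Set.Icc (0:ℝ) T, 0 ≤ g t := by
    intro t ht
    have := hanti ht hTmem ht.2
    rwa [hgT] at this
  -- key algebraic identity
  have key : ∀ X : ℝ, 4 * w * (r * X - (1/4) * (1-X)^2) = -((X - w) * (w * X - 1)) := by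
    intro X
    linear_combination X * hrw
  have h4w : (0:ℝ) < 4 * w := by linarith
  have hup : ∀ t ∈ Set.Icc (0:ℝ) T, g t ≤ w := by
    have := gron_nonpos (L := (w*B+1)/(4*w)) (F := fun t => g t - w)
      (hgc.sub continuousOn_const) ?_ (by show g T - w ≤ 0; rw [hgT]; linarith)
    · intro t ht
      have h : g t - w ≤ 0 := this t ht
      linarith
    · intro x hx hFx
      have hxI : x ∈ Set.Icc (0:ℝ) T := Ioo_subset_Icc_self hx
      refine ⟨p x, (((hpg x hxI).hasDerivAt (Icc_mem_nhds hx.1 hx.2)).sub_const w), ?_⟩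
      have hgw : w ≤ g x := by linarith
      have hq0x := hq0 x hxI
      have hkx := key (g x)
      have hBx := hgB x hxI
      have h5 : -((w*B+1) * (g x - w)) ≤ (4*w) * p x := by
        simp only [hp]
        nlinarith [mul_nonneg (sub_nonneg.mpr hgw) (sub_nonneg.mpr hBx),
          mul_nonneg (sub_nonneg.mpr hgw) hw.le]
      calc -((w*B+1)/(4*w)) * (g x - w) = (-((w*B+1) * (g x - w)))/(4*w) := by ring
        _ ≤ p x := by rw [div_le_iff₀ h4w]; linarith
  exact ⟨fun t ht => ⟨hlow t ht, hup t ht⟩, hder, hanti⟩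

/-- For the solution of the `ε = 0` system, with `ρ = √(r² + r) − r`, the marginal values
satisfy `0 ≤ ΔV_k⁰(t) ≤ 1 − 2ρ < 1` on `[0, T]` and `t ↦ ΔV_k⁰(t)` is nonincreasing. -/
theorem deltaV_bounds_of_no_interaction
    (K : ℕ) (hK : 1 ≤ K) (T r : ℝ) (hT : 0 < T) (hr : 0 < r)
    (M : ℕ → ℝ) (hM : ∀ k, k ≤ K → 0 ≤ M k)
    (hMsum : ∑ k ∈ Finset.Icc 0 K, M k = 1)
    (V m : ℕ → ℝ → ℝ) (hsol : IsHJBKolSolution K T r 0 M V m) :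
    ∀ k, 1 ≤ k → k ≤ K →
      (∀ t ∈ Set.Icc (0 : ℝ) T,
        0 ≤ V k t - V (k - 1) t ∧
        V k t - V (k - 1) t ≤ 1 - 2 * (Real.sqrt (r ^ 2 + r) - r)) ∧
      1 - 2 * (Real.sqrt (r ^ 2 + r) - r) < 1 ∧
      AntitoneOn (fun t => V k t - V (k - 1) t) (Set.Icc 0 T) := by
  obtain ⟨hV0, hVreg, -, hHJB, -, -, -, hVT, -⟩ := hsol
  have hHJB' : ∀ j, 1 ≤ j → j ≤ K → ∀ t ∈ Set.Icc (0:ℝ) T,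
      derivWithin (V j) (Set.Icc 0 T) t
        = r * V j t - (1/4) * (1 - (V j t - V (j-1) t))^2 := by
    intro j hj1 hjK t ht
    have h := hHJB j hj1 hjK t ht
    simp only [zero_mul, add_zero] at h
    linarith
  clear hHJB hM hMsum hK

  have hI : UniqueDiffOn ℝ (Set.Icc (0:ℝ) T) := uniqueDiffOn_Icc hT
  set s := Real.sqrt (r ^ 2 + r) with hs
  have hs2 : s ^ 2 = r ^ 2 + r := Real.sq_sqrt (by positivity)
  set w : ℝ := 1 - 2 * (s - r) with hwdef
  have hw : 0 < w := by
    have h1 : s < r + 1/2 := (Real.sqrt_lt' (by linarith)).mpr (by nlinarith)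
    simp only [hwdef]; linarith
  have hw1 : w < 1 := by
    have h1 : r < s := (Real.lt_sqrt hr.le).mpr (by nlinarith)
    simp only [hwdef]; linarith
  have hrw : 4 * (r * w) = (1 - w)^2 := by
    simp only [hwdef]
    linear_combination (-4) * hs2
  -- auxiliary regularity facts for all indices
  have hVc' : ∀ j, j ≤ K → ContinuousOn (V j) (Set.Icc 0 T) := by
    intro j hj
    cases j with
    | zero =>
      have : V 0 = fun _ => (0:ℝ) := funext hV0
      rw [this]; exact continuousOn_const
    | succ i => exact (hVreg _ (Nat.succ_le_succ (Nat.zero_le _)) hj).continuousOn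
  have hVd' : ∀ j, j ≤ K → ∀ t ∈ Set.Icc (0:ℝ) T,
      DifferentiableWithinAt ℝ (V j) (Set.Icc 0 T) t := by
    intro j hj t ht
    cases j with
    | zero =>
      have : V 0 = fun _ => (0:ℝ) := funext hV0
      rw [this]; exact differentiableWithinAt_const 0
    | succ i =>
      exact ((hVreg _ (Nat.succ_le_succ (Nat.zero_le _)) hj).differentiableOn one_ne_zero) t ht
  have hVT' : ∀ j, j ≤ K → V j T = 0 := by
    intro j hj
    cases j with
    | zero => exact hV0 T
    | succ i => exact hVT _ (Nat.succ_le_succ (Nat.zero_le _)) hj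
  set g : ℕ → ℝ → ℝ := fun k t => V k t - V (k - 1) t with hgdef
  have hgc : ∀ k, k ≤ K → ContinuousOn (g k) (Set.Icc 0 T) := by
    intro k hk
    exact (hVc' k hk).sub (hVc' (k-1) (by omega))
  have hgd : ∀ k, k ≤ K → ∀ t ∈ Set.Icc (0:ℝ) T,
      DifferentiableWithinAt ℝ (g k) (Set.Icc 0 T) t := by
    intro k hk t ht
    exact (hVd' k hk t ht).sub (hVd' (k-1) (by omega) t ht)
  have hgT : ∀ k, k ≤ K → g k T = 0 := by
    intro k hk
    simp only [hgdef]
    rw [hVT' k hk, hVT' (k-1) (by omega), sub_zero]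
  -- the ODE satisfied by g k
  have hode : ∀ k, 1 ≤ k → k ≤ K → ∀ t ∈ Set.Icc (0:ℝ) T,
      derivWithin (g k) (Set.Icc 0 T) t
        = derivWithin (V k) (Set.Icc 0 T) t - derivWithin (V (k-1)) (Set.Icc 0 T) t := by
    intro k hk1 hk t ht
    exact derivWithin_sub (hVd' k hk t ht) (hVd' (k-1) (by omega) t ht)
  have hderiv0 : ∀ t ∈ Set.Icc (0:ℝ) T, derivWithin (V 0) (Set.Icc 0 T) t = 0 := by
    intro t ht
    have : V 0 = fun _ => (0:ℝ) := funext hV0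
    rw [this]
    simp
  -- main induction
  have main : ∀ k, 1 ≤ k → k ≤ K →
      (∀ t ∈ Set.Icc (0:ℝ) T, 0 ≤ g k t ∧ g k t ≤ w) ∧
      (∀ t ∈ Set.Icc (0:ℝ) T, derivWithin (g k) (Set.Icc 0 T) t ≤ 0) ∧
      AntitoneOn (g k) (Set.Icc 0 T) := by
    intro k
    induction k with
    | zero => exact fun h => absurd h (by omega)
    | succ n ih =>
      intro _ hnK
      rcases Nat.eq_zero_or_pos n with hn0 | hn1
      · -- base case k = 1
        subst hn0
        refine core_ode hT hr hw hw1 hrw (hgc 1 hnK) (hgd 1 hnK)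
          continuousOn_const (fun t ht => differentiableWithinAt_const 0)
          (fun t ht => le_rfl) (fun t ht => by simp)
          (by norm_num) (hgT 1 hnK) ?_
        intro t ht
        rw [hode 1 le_rfl hnK t ht, hderiv0 t ht, hHJB' 1 le_rfl hnK t ht]
        have h0 : V 0 t = 0 := hV0 t
        simp only [hgdef]
        rw [h0]
        ring
      · -- inductive step k = n+1, n ≥ 1
        obtain ⟨ihb, ihd, -⟩ := ih hn1 (by omega)
        set q : ℝ → ℝ := fun t => (1/4) * (1 - g n t)^2 with hqdef
        have hnle : n ≤ K := by omega
        have hqhd : ∀ t ∈ Set.Icc (0:ℝ) T, HasDerivWithinAt q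
            ((1/4) * ((2:ℕ) * (1 - g n t)^(2-1) * (-(derivWithin (g n) (Set.Icc 0 T) t))))
            (Set.Icc 0 T) t := by
          intro t ht
          exact ((((hgd n hnle t ht).hasDerivWithinAt).const_sub 1).pow 2).const_mul (1/4)
        refine core_ode (q := q) hT hr hw hw1 hrw (hgc _ hnK) (hgd _ hnK)
          (continuousOn_const.mul ((continuousOn_const.sub (hgc n hnle)).pow 2))
          (fun t ht => (hqhd t ht).differentiableWithinAt)
          (fun t ht => by show 0 ≤ 1/4 * (1 - g n t)^2; positivity)
          ?_ ?_ (hgT _ hnK) ?_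
        · intro t ht
          rw [(hqhd t ht).derivWithin (hI t ht)]
          have h1 := (ihb t ht).2
          have h2 := ihd t ht
          have h3 : 0 ≤ 1 - g n t := by linarith
          push_cast
          rw [pow_one]
          exact mul_nonneg (by norm_num)
            (mul_nonneg (mul_nonneg (by norm_num) h3) (neg_nonneg.mpr h2))
        · show (1:ℝ)/4 * (1 - g n T)^2 ≤ 1/4
          rw [hgT n hnle]
          norm_num
        · intro t ht
          rw [hode (n+1) (by omega) hnK t ht, hHJB' (n+1) (by omega) hnK t ht]
          simp only [Nat.add_sub_cancel]
          rw [hHJB' n hn1 hnle t ht]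
          simp only [hgdef, hqdef, Nat.add_sub_cancel]
          ring
  -- conclude
  intro k hk1 hkK
  obtain ⟨hb, -, hanti⟩ := main k hk1 hkK
  refine ⟨fun t ht => hb t ht, ?_, hanti⟩
  have h1 : r < s := (Real.lt_sqrt hr.le).mpr (by nlinarith)
  linarith
end
end

section
/- Let (V^{(0)}, m^{(0)}) be the solution of the HJB–Kolmogorov system with ε = 0, and set η^{(0)}(t) := Σ_{k=1}^K m^{(0)}_k(t). Then for every k ∈ {1,…,K} and every t ∈ [0,T]: 0 ≤ m^{(0)}_k(t) ≤ 1 and 0 ≤ η^{(0)}(t) ≤ 1. -/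
noncomputable section

/-- First-crossing lemma (backward): if `f(T) > 0` and `f` has negative derivative at
any zero in `[0, T)`, then `f > 0` on `[0, T]`. -/
lemma crossing_backward {T : ℝ} {f : ℝ → ℝ}
    (hc : ContinuousOn f (Set.Icc 0 T)) (hfT : 0 < f T)
    (hd : ∀ t ∈ Set.Ico (0:ℝ) T, f t = 0 →
      ∃ d, HasDerivWithinAt f d (Set.Icc 0 T) t ∧ d < 0) :
    ∀ t ∈ Set.Icc (0:ℝ) T, 0 < f t := by
  by_contra hcon
  push_neg at hcon
  obtain ⟨t₁, ht₁, ht₁f⟩ := hcon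
  set S : Set ℝ := Set.Icc 0 T ∩ f ⁻¹' Set.Iic 0 with hSdef
  have hS_closed : IsClosed S := hc.preimage_isClosed_of_isClosed isClosed_Icc isClosed_Iic
  have hS_ne : S.Nonempty := ⟨t₁, ht₁, ht₁f⟩
  have hS_bdd : BddAbove S := ⟨T, fun x hx => hx.1.2⟩
  set t₀ := sSup S with ht₀def
  have ht₀S : t₀ ∈ S := hS_closed.csSup_mem hS_ne hS_bdd
  have ht₀I : t₀ ∈ Set.Icc (0:ℝ) T := ht₀S.1
  have ht₀T : t₀ < T := lt_of_le_of_ne ht₀I.2 (by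
    intro h
    have h2 : f t₀ ≤ 0 := ht₀S.2
    rw [h] at h2
    exact absurd hfT (not_lt.2 h2))
  have hpos : ∀ s ∈ Set.Ioc t₀ T, 0 < f s := by
    intro s hs
    by_contra hneg
    push_neg at hneg
    have hsS : s ∈ S := ⟨⟨le_trans ht₀I.1 hs.1.le, hs.2⟩, hneg⟩
    exact absurd (le_csSup hS_bdd hsS) (not_le.2 hs.1)
  have hfilt : (nhdsWithin t₀ (Set.Ioc t₀ T)).NeBot := by
    rw [nhdsWithin_Ioc_eq_nhdsGT ht₀T]; infer_instance
  have hf0 : f t₀ = 0 := by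
    have htend : Filter.Tendsto f (nhdsWithin t₀ (Set.Ioc t₀ T)) (nhds (f t₀)) := by
      apply (hc t₀ ht₀I).mono
      intro s hs
      exact ⟨le_trans ht₀I.1 hs.1.le, hs.2⟩
    have h0le : 0 ≤ f t₀ :=
      ge_of_tendsto htend (eventually_mem_nhdsWithin.mono fun s hs => (hpos s hs).le)
    exact le_antisymm ht₀S.2 h0le
  obtain ⟨d, hder, hdneg⟩ := hd t₀ ⟨ht₀I.1, ht₀T⟩ hf0
  have hslope := hasDerivWithinAt_iff_tendsto_slope.1 hder
  have hslope' : Filter.Tendsto (slope f t₀) (nhdsWithin t₀ (Set.Ioc t₀ T)) (nhds d) := by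
    apply hslope.mono_left (nhdsWithin_mono _ ?_)
    intro s hs
    exact ⟨⟨le_trans ht₀I.1 hs.1.le, hs.2⟩, ne_of_gt hs.1⟩
  have hev : ∀ᶠ s in nhdsWithin t₀ (Set.Ioc t₀ T), slope f t₀ s < 0 :=
    hslope'.eventually_lt_const hdneg
  obtain ⟨s, hsl, hs⟩ := (hev.and eventually_mem_nhdsWithin).exists
  have hgt : 0 < slope f t₀ s := by
    have h1 : 0 < f s - f t₀ := by rw [hf0]; simpa using hpos s hs
    have h2 : 0 < s - t₀ := sub_pos.2 hs.1
    have heq : slope f t₀ s = (f s - f t₀) / (s - t₀) := by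
      simp [slope_def_field, div_eq_div_iff]
    rw [heq]
    exact div_pos h1 h2
  linarith

/-- First-crossing lemma (forward, family version): if each `n k` starts positive and has
positive derivative at any zero where the whole family is nonnegative, then all `n k`
stay positive on `[0, T]`. -/
lemma crossing_forward {T : ℝ} (K : ℕ) {n : ℕ → ℝ → ℝ}
    (hc : ∀ k ≤ K, ContinuousOn (n k) (Set.Icc 0 T))
    (h0 : ∀ k ≤ K, 0 < n k 0)
    (hd : ∀ k ≤ K, ∀ t ∈ Set.Ioc (0:ℝ) T, (∀ j ≤ K, 0 ≤ n j t) → n k t = 0 →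
      ∃ d, HasDerivWithinAt (n k) d (Set.Icc 0 T) t ∧ 0 < d) :
    ∀ k ≤ K, ∀ t ∈ Set.Icc (0:ℝ) T, 0 < n k t := by
  by_contra hcon
  push_neg at hcon
  obtain ⟨k₁, hk₁, t₁, ht₁, ht₁f⟩ := hcon
  set S : Set ℝ := ⋃ k ∈ Finset.range (K+1), (Set.Icc 0 T ∩ n k ⁻¹' Set.Iic 0) with hSdef
  have hS_closed : IsClosed S :=
    isClosed_biUnion_finset fun k hk =>
      (hc k (Nat.lt_succ_iff.1 (Finset.mem_range.1 hk))).preimage_isClosed_of_isClosed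
        isClosed_Icc isClosed_Iic
  have hmemS : ∀ x, x ∈ S ↔ x ∈ Set.Icc (0:ℝ) T ∧ ∃ k ≤ K, n k x ≤ 0 := by
    intro x
    simp only [hSdef, Set.mem_iUnion, Finset.mem_range, Nat.lt_succ_iff, Set.mem_inter_iff,
      Set.mem_preimage, Set.mem_Iic]
    constructor
    · rintro ⟨k, hk, hx, hnk⟩; exact ⟨hx, k, hk, hnk⟩
    · rintro ⟨hx, k, hk, hnk⟩; exact ⟨k, hk, hx, hnk⟩
  have hS_ne : S.Nonempty := ⟨t₁, (hmemS t₁).2 ⟨ht₁, k₁, hk₁, ht₁f⟩⟩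
  have hS_bdd : BddBelow S := ⟨0, fun x hx => ((hmemS x).1 hx).1.1⟩
  set t₀ := sInf S with ht₀def
  have ht₀S : t₀ ∈ S := hS_closed.csInf_mem hS_ne hS_bdd
  obtain ⟨ht₀I, k, hk, hnk⟩ := (hmemS t₀).1 ht₀S
  have ht₀pos : 0 < t₀ := by
    rcases lt_or_eq_of_le ht₀I.1 with h | h
    · exact h
    · exfalso; rw [← h] at hnk; exact absurd (h0 k hk) (not_lt.2 hnk)
  have hpre : ∀ s ∈ Set.Ico 0 t₀, ∀ j ≤ K, 0 < n j s := by
    intro s hs j hj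
    by_contra hneg
    push_neg at hneg
    have hsS : s ∈ S := (hmemS s).2 ⟨⟨hs.1, le_trans hs.2.le ht₀I.2⟩, j, hj, hneg⟩
    exact absurd (csInf_le hS_bdd hsS) (not_le.2 hs.2)
  have hfilt : (nhdsWithin t₀ (Set.Ico 0 t₀)).NeBot := by
    rw [nhdsWithin_Ico_eq_nhdsLT ht₀pos]; infer_instance
  have hsubI : Set.Ico (0:ℝ) t₀ ⊆ Set.Icc 0 T := fun s hs => ⟨hs.1, le_trans hs.2.le ht₀I.2⟩
  have h0le : ∀ j ≤ K, 0 ≤ n j t₀ := by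
    intro j hj
    have htend : Filter.Tendsto (n j) (nhdsWithin t₀ (Set.Ico 0 t₀)) (nhds (n j t₀)) :=
      (hc j hj t₀ ht₀I).mono hsubI
    exact ge_of_tendsto htend (eventually_mem_nhdsWithin.mono fun s hs => (hpre s hs j hj).le)
  have hnk0 : n k t₀ = 0 := le_antisymm hnk (h0le k hk)
  obtain ⟨d, hder, hdpos⟩ := hd k hk t₀ ⟨ht₀pos, ht₀I.2⟩ h0le hnk0
  have hslope := hasDerivWithinAt_iff_tendsto_slope.1 hder
  have hslope' : Filter.Tendsto (slope (n k) t₀) (nhdsWithin t₀ (Set.Ico 0 t₀)) (nhds d) := by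
    apply hslope.mono_left (nhdsWithin_mono _ ?_)
    intro s hs
    exact ⟨hsubI hs, ne_of_lt hs.2⟩
  have hev : ∀ᶠ s in nhdsWithin t₀ (Set.Ico 0 t₀), 0 < slope (n k) t₀ s :=
    hslope'.eventually_const_lt hdpos
  obtain ⟨s, hsl, hs⟩ := (hev.and eventually_mem_nhdsWithin).exists
  have hlt : slope (n k) t₀ s < 0 := by
    have h1 : 0 < n k s - n k t₀ := by rw [hnk0]; simpa using hpre s hs k hk
    have h2 : s - t₀ < 0 := sub_neg.2 hs.2
    have heq : slope (n k) t₀ s = (n k s - n k t₀) / (s - t₀) := by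
      simp [slope_def_field, div_eq_div_iff]
    rw [heq]
    exact div_neg_of_pos_of_neg h1 h2
  linarith

/-- Telescoping sum over `Icc 1 (K-1)`. -/
lemma telescope_Icc (g : ℕ → ℝ) : ∀ K : ℕ, 1 ≤ K →
    ∑ k ∈ Finset.Icc 1 (K-1), (g (k+1) - g k) = g K - g 1 := by
  intro K
  induction K with
  | zero => intro h; omega
  | succ n ih =>
    intro _
    rcases Nat.eq_zero_or_pos n with h0 | h1
    · subst h0; simp
    · have hn : n + 1 - 1 = n := rfl
      rw [hn]
      have hins : Finset.Icc 1 n = insert n (Finset.Icc 1 (n-1)) := by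
        ext j; simp only [Finset.mem_Icc, Finset.mem_insert]; omega
      have hnot : n ∉ Finset.Icc 1 (n-1) := by simp only [Finset.mem_Icc]; omega
      rw [hins, Finset.sum_insert hnot, ih h1]
      ring

/-- For the solution of the `ε = 0` system, `0 ≤ m_k⁰(t) ≤ 1` for `k = 1, …, K` and
`0 ≤ η⁰(t) = ∑_{k=1}^K m_k⁰(t) ≤ 1` on `[0, T]`. -/
theorem density_bounds_of_no_interaction
    (K : ℕ) (hK : 1 ≤ K) (T r : ℝ) (hT : 0 < T) (hr : 0 < r)
    (M : ℕ → ℝ) (hM : ∀ k, k ≤ K → 0 ≤ M k)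
    (hMsum : ∑ k ∈ Finset.Icc 0 K, M k = 1)
    (V m : ℕ → ℝ → ℝ) (hsol : IsHJBKolSolution K T r 0 M V m) :
    (∀ k, 1 ≤ k → k ≤ K → ∀ t ∈ Set.Icc (0 : ℝ) T, 0 ≤ m k t ∧ m k t ≤ 1) ∧
    (∀ t ∈ Set.Icc (0 : ℝ) T, 0 ≤ marketEta K m t ∧ marketEta K m t ≤ 1) := by
  obtain ⟨hV0, hVreg, hmreg, hHJB, hm0eq, hmkeq, hmKeq, hVT, hminit⟩ := hsol
  set I := Set.Icc (0:ℝ) T with hIdef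
  have hV0fun : V 0 = fun _ => (0:ℝ) := funext hV0
  have hVcont : ∀ j, j ≤ K → ContinuousOn (V j) I := by
    intro j hj
    rcases Nat.eq_zero_or_pos j with h | h
    · subst h; rw [hV0fun]; exact continuousOn_const
    · exact (hVreg j h hj).continuousOn
  have hmcont : ∀ j, j ≤ K → ContinuousOn (m j) I := fun j hj => (hmreg j hj).continuousOn
  -- Step A: positivity of the intensities λ_k.
  have hVD : ∀ j, 1 ≤ j → j ≤ K → ∀ t ∈ I, HasDerivWithinAt (V j)
      (r * V j t - (1/4) * (1 - (V j t - V (j-1) t))^2) I t := by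
    intro j h1 hj t ht
    have h := (((hVreg j h1 hj).differentiableOn one_ne_zero) t ht).hasDerivWithinAt
    have heq := hHJB j h1 hj t ht
    rw [zero_mul, add_zero] at heq
    have heq2 : derivWithin (V j) I t = r * V j t - (1/4) * (1 - (V j t - V (j-1) t))^2 := by
      linarith
    rwa [heq2] at h
  have hfpos : ∀ k, 1 ≤ k → k ≤ K → ∀ t ∈ I, 0 < 1 - (V k t - V (k-1) t) := by
    intro k h1 hk
    apply crossing_backward
    · exact continuousOn_const.sub ((hVcont k hk).sub (hVcont (k-1) (le_trans (Nat.sub_le k 1) hk)))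
    · have hkT : V k T = 0 := hVT k h1 hk
      have hk1T : V (k-1) T = 0 := by
        rcases Nat.eq_zero_or_pos (k-1) with h | h
        · rw [h]; exact hV0 T
        · exact hVT (k-1) h (le_trans (Nat.sub_le k 1) hk)
      rw [hkT, hk1T]; norm_num
    · intro t ht hft
      have hzero : V k t - V (k-1) t = 1 := by linarith
      have htI : t ∈ I := ⟨ht.1, ht.2.le⟩
      rcases Nat.eq_zero_or_pos (k-1) with h | h
      · have hk1 : k = 1 := by omega
        subst hk1
        refine ⟨-(r * V 1 t - (1/4) * (1 - (V 1 t - V 0 t))^2) , ?_, ?_⟩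
        · have hdk := hVD 1 le_rfl hk t htI
          have h0d : HasDerivWithinAt (V 0) 0 I t := by
            rw [hV0fun]; exact hasDerivWithinAt_const t I 0
          have h2 := ((hasDerivWithinAt_const t I (1:ℝ)).sub (hdk.sub h0d))
          exact h2.congr_deriv (by simp only [Nat.sub_self]; ring)
        · have hV0t := hV0 t
          have hV0t' : V (1-1) t = 0 := hV0t
          have h1eq : V 1 t = 1 := by linarith
          rw [h1eq, hV0t]
          nlinarith
      · have hk1K : k - 1 ≤ K := le_trans (Nat.sub_le k 1) hk
        refine ⟨-((r * V k t - (1/4) * (1 - (V k t - V (k-1) t))^2)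
            - (r * V (k-1) t - (1/4) * (1 - (V (k-1) t - V (k-1-1) t))^2)), ?_, ?_⟩
        · have hdk := hVD k h1 hk t htI
          have hdk1 := hVD (k-1) h hk1K t htI
          have h2 := (hasDerivWithinAt_const t I (1:ℝ)).sub (hdk.sub hdk1)
          exact h2.congr_deriv (by ring)
        · rw [hzero]
          have := sq_nonneg (1 - (V (k-1) t - V (k-1-1) t))
          nlinarith
  have hlam_eq : ∀ k t, marketLam K 0 V m k t = (1/2) * (1 - (V k t - V (k-1) t)) := by
    intro k t; simp [marketLam]
  have hlam_pos : ∀ k, 1 ≤ k → k ≤ K → ∀ t ∈ I, 0 < marketLam K 0 V m k t := by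
    intro k h1 hk t ht
    rw [hlam_eq]
    linarith [hfpos k h1 hk t ht]
  -- Uniform bound Λ for the intensities.
  have hlamcont : ∀ k, 1 ≤ k → k ≤ K → ContinuousOn (fun t => marketLam K 0 V m k t) I := by
    intro k h1 hk
    have heq : (fun t => marketLam K 0 V m k t)
        = fun t => (1/2) * (1 - (V k t - V (k-1) t)) := funext (hlam_eq k)
    rw [heq]
    exact continuousOn_const.mul
      (continuousOn_const.sub ((hVcont k hk).sub (hVcont (k-1) (le_trans (Nat.sub_le k 1) hk))))
  have hgc : ContinuousOn (fun t => ∑ k ∈ Finset.Icc 1 K, marketLam K 0 V m k t) I := by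
    apply continuousOn_finset_sum
    intro k hk
    obtain ⟨h1, h2⟩ := Finset.mem_Icc.1 hk
    exact hlamcont k h1 h2
  obtain ⟨ts, htsI, hts⟩ := isCompact_Icc.exists_isMaxOn (Set.nonempty_Icc.2 hT.le) hgc
  set Λ := ∑ k ∈ Finset.Icc 1 K, marketLam K 0 V m k ts with hΛdef
  have hΛ0 : 0 ≤ Λ := Finset.sum_nonneg fun k hk => by
    obtain ⟨h1, h2⟩ := Finset.mem_Icc.1 hk
    exact (hlam_pos k h1 h2 ts htsI).le
  have hlam_le : ∀ k, 1 ≤ k → k ≤ K → ∀ t ∈ I, marketLam K 0 V m k t ≤ Λ := by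
    intro k h1 hk t ht
    have hle1 : marketLam K 0 V m k t ≤ ∑ j ∈ Finset.Icc 1 K, marketLam K 0 V m j t :=
      Finset.single_le_sum (f := fun j => marketLam K 0 V m j t)
        (fun j hj => (hlam_pos j (Finset.mem_Icc.1 hj).1 (Finset.mem_Icc.1 hj).2 t ht).le)
        (Finset.mem_Icc.2 ⟨h1, hk⟩)
    exact le_trans hle1 (hts ht)
  -- derivatives of m
  have hmD : ∀ j, j ≤ K → ∀ t ∈ I, HasDerivWithinAt (m j) (derivWithin (m j) I t) I t :=
    fun j hj t ht => (((hmreg j hj).differentiableOn one_ne_zero) t ht).hasDerivWithinAt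
  -- Step B: nonnegativity of m via a barrier argument.
  have key : ∀ δ : ℝ, 0 < δ → ∀ j, j ≤ K → ∀ t ∈ I, 0 < m j t + δ * Real.exp ((Λ+1)*t) := by
    intro δ hδ
    apply crossing_forward K (n := fun j t => m j t + δ * Real.exp ((Λ+1)*t))
    · intro k hk
      exact (hmcont k hk).add (Continuous.continuousOn (by fun_prop))
    · intro k hk
      have h1 : m k 0 = M k := hminit k hk
      have h2 : (0:ℝ) ≤ M k := hM k hk
      rw [h1, mul_zero, Real.exp_zero, mul_one]
      linarith
    · intro k hk t ht hall hzero
      have hexp : HasDerivAt (fun s : ℝ => δ * Real.exp ((Λ+1)*s))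
          (δ * ((Λ+1) * Real.exp ((Λ+1)*t))) t := by
        have h1 : HasDerivAt (fun s : ℝ => (Λ+1)*s) (Λ+1) t := by
          simpa using (hasDerivAt_id t).const_mul (Λ+1)
        have h2 := h1.exp
        have h3 := h2.const_mul δ
        exact h3.congr_deriv (by ring)
      set E := Real.exp ((Λ+1)*t) with hE
      have hEpos : 0 < E := Real.exp_pos _
      have htI : t ∈ I := ⟨ht.1.le, ht.2⟩
      have hmkt : m k t = -(δ*E) := by linarith [hzero]
      rcases Nat.eq_zero_or_pos k with hk0 | hk1
      · subst hk0
        have hd := hmD 0 (Nat.zero_le K) t htI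
        rw [hm0eq t htI] at hd
        refine ⟨marketLam K 0 V m 1 t * m 1 t + δ * ((Λ+1)*E), hd.add hexp.hasDerivWithinAt, ?_⟩
        have hl1 := hlam_pos 1 le_rfl hK t htI
        have hl1' := hlam_le 1 le_rfl hK t htI
        have hm1 : 0 ≤ m 1 t + δ * E := hall 1 hK
        nlinarith [mul_nonneg hl1.le hm1,
          mul_nonneg (sub_nonneg.2 hl1') (mul_nonneg hδ.le hEpos.le)]
      · rcases eq_or_lt_of_le (show k ≤ K from hk) with hkK | hkK
        · subst hkK
          have hd := hmD k le_rfl t htI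
          rw [hmKeq t htI] at hd
          refine ⟨-(marketLam k 0 V m k t) * m k t + δ * ((Λ+1)*E),
            hd.add hexp.hasDerivWithinAt, ?_⟩
          have hlk := hlam_pos k hk1 le_rfl t htI
          rw [hmkt]
          nlinarith [mul_pos hlk (mul_pos hδ hEpos)]
        · have hkK1 : k ≤ K - 1 := by omega
          have hk1K : k + 1 ≤ K := by omega
          have hd := hmD k hk t htI
          rw [hmkeq k hk1 hkK1 t htI] at hd
          refine ⟨marketLam K 0 V m (k+1) t * m (k+1) t - marketLam K 0 V m k t * m k t
            + δ * ((Λ+1)*E), hd.add hexp.hasDerivWithinAt, ?_⟩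
          have hlk := hlam_pos k hk1 hk t htI
          have hlk1 := hlam_pos (k+1) (by omega) hk1K t htI
          have hlk1' := hlam_le (k+1) (by omega) hk1K t htI
          have hm1 : 0 ≤ m (k+1) t + δ * E := hall (k+1) hk1K
          nlinarith [mul_nonneg hlk1.le hm1,
            mul_nonneg (sub_nonneg.2 hlk1') (mul_nonneg hδ.le hEpos.le),
            mul_nonneg hlk.le (mul_nonneg hδ.le hEpos.le)]
  have hm_nonneg : ∀ j, j ≤ K → ∀ t ∈ I, 0 ≤ m j t := by
    intro j hj t ht
    by_contra hneg
    push_neg at hneg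
    set E := Real.exp ((Λ+1)*t) with hE
    have hEpos : 0 < E := Real.exp_pos _
    have hδ : 0 < -m j t / (2*E) := div_pos (neg_pos.2 hneg) (by positivity)
    have hkey := key _ hδ j hj t ht
    have heq : m j t + (-m j t / (2*E)) * E = m j t / 2 := by
      field_simp
      ring
    rw [heq] at hkey
    linarith
  -- Step C: conservation of total mass.
  have hsumconst : ∀ t ∈ I, ∑ k ∈ Finset.Icc 0 K, m k t = 1 := by
    have hder0 : ∀ x ∈ Set.Ico (0:ℝ) T,
        HasDerivWithinAt (fun t => ∑ k ∈ Finset.Icc 0 K, m k t) 0 (Set.Ici x) x := by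
      intro x hx
      have hxI : x ∈ I := ⟨hx.1, hx.2.le⟩
      have hsum : HasDerivWithinAt (fun t => ∑ k ∈ Finset.Icc 0 K, m k t)
          (∑ k ∈ Finset.Icc 0 K, derivWithin (m k) I x) I x :=
        HasDerivWithinAt.fun_sum fun k hk => hmD k (Finset.mem_Icc.1 hk).2 x hxI
      have hval : (∑ k ∈ Finset.Icc 0 K, derivWithin (m k) I x) = 0 := by
        have hsplit0 : Finset.Icc 0 K = insert 0 (Finset.Icc 1 K) := by
          ext j; simp only [Finset.mem_Icc, Finset.mem_insert]; omega
        have hnot0 : (0:ℕ) ∉ Finset.Icc 1 K := by simp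
        have hsplitK : Finset.Icc 1 K = insert K (Finset.Icc 1 (K-1)) := by
          ext j; simp only [Finset.mem_Icc, Finset.mem_insert]; omega
        have hnotK : K ∉ Finset.Icc 1 (K-1) := by simp only [Finset.mem_Icc]; omega
        rw [hsplit0, Finset.sum_insert hnot0, hsplitK, Finset.sum_insert hnotK]
        rw [hm0eq x hxI, hmKeq x hxI]
        have hmid : ∀ k ∈ Finset.Icc 1 (K-1), derivWithin (m k) I x
            = marketLam K 0 V m (k+1) x * m (k+1) x - marketLam K 0 V m k x * m k x := by
          intro k hk
          obtain ⟨h1, h2⟩ := Finset.mem_Icc.1 hk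
          exact hmkeq k h1 h2 x hxI
        rw [Finset.sum_congr rfl hmid,
          telescope_Icc (fun k => marketLam K 0 V m k x * m k x) K hK]
        ring
      rw [hval] at hsum
      apply hsum.mono_of_mem_nhdsWithin
      rw [mem_nhdsWithin]
      exact ⟨Set.Iio T, isOpen_Iio, hx.2, fun y hy => ⟨le_trans hx.1 hy.2, hy.1.le⟩⟩
    have hcont : ContinuousOn (fun t => ∑ k ∈ Finset.Icc 0 K, m k t) I := by
      apply continuousOn_finset_sum
      intro k hk
      exact hmcont k (Finset.mem_Icc.1 hk).2
    have hconst := constant_of_has_deriv_right_zero hcont hder0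
    intro t ht
    rw [hconst t ht]
    have : ∑ k ∈ Finset.Icc 0 K, m k 0 = ∑ k ∈ Finset.Icc 0 K, M k :=
      Finset.sum_congr rfl fun k hk => hminit k (Finset.mem_Icc.1 hk).2
    rw [this, hMsum]
  -- Step D: conclusions.
  constructor
  · intro k h1 hk t ht
    refine ⟨hm_nonneg k hk t ht, ?_⟩
    have hsum := hsumconst t ht
    have hle := Finset.single_le_sum (f := fun j => m j t)
      (fun j hj => hm_nonneg j (Finset.mem_Icc.1 hj).2 t ht)
      (Finset.mem_Icc.2 ⟨Nat.zero_le k, hk⟩)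
    linarith
  · intro t ht
    have hsum := hsumconst t ht
    constructor
    · exact Finset.sum_nonneg fun j hj => hm_nonneg j (Finset.mem_Icc.1 hj).2 t ht
    · have hsub : Finset.Icc 1 K ⊆ Finset.Icc 0 K := by
        intro j hj
        simp only [Finset.mem_Icc] at hj ⊢
        omega
      have hle := Finset.sum_le_sum_of_subset_of_nonneg hsub
        (fun j hj _ => hm_nonneg j (Finset.mem_Icc.1 hj).2 t ht)
      calc marketEta K m t = ∑ j ∈ Finset.Icc 1 K, m j t := rfl
        _ ≤ ∑ j ∈ Finset.Icc 0 K, m j t := hle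
        _ = 1 := hsum
end
end

section
/- Let (V^{(0)}, m^{(0)}) be the solution of the HJB–Kolmogorov system with ε = 0, set ρ := √(r² + r) − r, and define λ^{(0)}_k(t) := ½(1 − ΔV^{(0)}_k(t)). Then for every k ∈ {1,…,K} and every t ∈ [0,T]: ρ ≤ λ^{(0)}_k(t) ≤ ½; in particular λ^{(0)}_k is bounded below away from 0 uniformly in k and t. -/
noncomputable section

open Set

/-- Backward invariance for the Riccati-type ODE `w' = r w - ¼(1-w)² + c(t)` with `w(T)=0`:
`w` stays in `[0, 1-2ρ]` where `r(1-2ρ) = ρ²`, `0 < ρ ≤ ½`, provided `0 ≤ c ≤ ¼`. -/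
lemma ode_invariant {T r ρ : ℝ} (hr : 0 < r) (hρ : 0 < ρ) (hρh : ρ ≤ 1/2)
    (hρr : r * (1 - 2*ρ) = ρ^2) (w c : ℝ → ℝ)
    (hder : ∀ t ∈ Icc (0:ℝ) T, HasDerivWithinAt w
      (r * w t - (1/4)*(1 - w t)^2 + c t) (Icc 0 T) t)
    (hc0 : ∀ t ∈ Icc (0:ℝ) T, 0 ≤ c t) (hc4 : ∀ t ∈ Icc (0:ℝ) T, c t ≤ 1/4)
    (hwT : w T = 0) :
    ∀ t ∈ Icc (0:ℝ) T, 0 ≤ w t ∧ w t ≤ 1 - 2*ρ := by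
  set L : ℝ := r + ρ + 1 with hL
  have hL1 : 1 ≤ L := by simp [hL]; linarith
  have hL0 : 0 < L := by linarith
  set g : ℝ → ℝ := fun s => w (T - s) with hg
  have hmap : ∀ s ∈ Icc (0:ℝ) T, T - s ∈ Icc (0:ℝ) T := by
    intro s hs; exact ⟨by linarith [hs.2], by linarith [hs.1]⟩
  have hgder : ∀ s ∈ Icc (0:ℝ) T, HasDerivWithinAt g
      (-(r * g s - (1/4)*(1 - g s)^2 + c (T - s))) (Icc 0 T) s := by
    intro s hs
    have h2 : HasDerivWithinAt (fun x : ℝ => T - x) (-1) (Icc 0 T) s :=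
      (hasDerivWithinAt_id s _).const_sub T
    have h3 := (hder (T - s) (hmap s hs)).comp s h2 (fun x hx => hmap x hx)
    have : g s = w (T - s) := rfl
    refine h3.congr_deriv ?_
    rw [this]; ring
  have hgcont : ContinuousOn g (Icc 0 T) := fun s hs => (hgder s hs).continuousWithinAt
  have hg0 : g 0 = 0 := by simp [hg, hwT]
  have hgderI : ∀ x ∈ Ico (0:ℝ) T, HasDerivWithinAt g
      (-(r * g x - (1/4)*(1 - g x)^2 + c (T - x))) (Ici x) x := fun x hx =>
    (hgder x (Ico_subset_Icc_self hx)).mono_of_mem_nhdsWithin (Icc_mem_nhdsGE_of_mem hx)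
  have hBder : ∀ (a δ : ℝ), ∀ x ∈ Ico (0:ℝ) T,
      HasDerivWithinAt (fun x => a + δ * Real.exp (L * x)) (δ * (Real.exp (L * x) * L))
        (Ici x) x := by
    intro a δ x _
    have := ((((hasDerivAt_id x).const_mul L).exp.const_mul δ).const_add a).hasDerivWithinAt
      (s := Ici x)
    simpa using this
  have hBcont : ∀ (a δ : ℝ), ContinuousOn (fun x => a + δ * Real.exp (L * x)) (Icc (0:ℝ) T) := by
    intro a δ; fun_prop
  -- bounds on η := δ * exp (L x)
  have hηbound : ∀ δ : ℝ, 0 < δ → δ ≤ Real.exp (-(L*T)) → ∀ x ∈ Icc (0:ℝ) T,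
      0 < δ * Real.exp (L * x) ∧ δ * Real.exp (L * x) ≤ 1 := by
    intro δ hδ hδ' x hx
    refine ⟨by positivity, ?_⟩
    calc δ * Real.exp (L * x) ≤ Real.exp (-(L*T)) * Real.exp (L * x) := by
          exact mul_le_mul_of_nonneg_right hδ' (Real.exp_nonneg _)
      _ = Real.exp (L * x - L * T) := by rw [← Real.exp_add]; ring_nf
      _ ≤ 1 := Real.exp_le_one_iff.2 (by nlinarith [hx.2, hL0])
  -- upper fence
  have upper : ∀ δ : ℝ, 0 < δ → δ ≤ Real.exp (-(L*T)) → ∀ x ∈ Icc (0:ℝ) T,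
      g x ≤ (1 - 2*ρ) + δ * Real.exp (L * x) := by
    intro δ hδ hδ'
    apply image_le_of_deriv_right_lt_deriv_boundary' hgcont hgderI _ (hBcont _ _) (hBder _ _)
    · intro x hx hfx
      obtain ⟨hη0, hη1⟩ := hηbound δ hδ hδ' x (Ico_subset_Icc_self hx)
      have hc' := hc0 (T - x) (hmap x (Ico_subset_Icc_self hx))
      set η := δ * Real.exp (L * x)
      rw [hfx]
      have : δ * (Real.exp (L * x) * L) = L * η := by ring
      rw [this]
      nlinarith [mul_nonneg hη0.le (sub_nonneg.2 hη1), mul_pos hr hη0, mul_pos hρ hη0]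
    · rw [hg0]; simp; nlinarith [Real.exp_pos (L*(0:ℝ)), hδ]
  -- lower fence
  have lower : ∀ δ : ℝ, 0 < δ → δ ≤ Real.exp (-(L*T)) → ∀ x ∈ Icc (0:ℝ) T,
      -(g x) ≤ 0 + δ * Real.exp (L * x) := by
    intro δ hδ hδ'
    apply image_le_of_deriv_right_lt_deriv_boundary'
      (f' := fun x => r * g x - (1/4)*(1 - g x)^2 + c (T - x))
      (hgcont.neg) _ _ (hBcont _ _) (hBder _ _)
    · intro x hx hfx
      obtain ⟨hη0, hη1⟩ := hηbound δ hδ hδ' x (Ico_subset_Icc_self hx)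
      have hc' := hc4 (T - x) (hmap x (Ico_subset_Icc_self hx))
      set η := δ * Real.exp (L * x)
      have hgx : g x = -η := by rw [Pi.neg_apply] at hfx; linarith [hfx]
      rw [hgx]
      have : δ * (Real.exp (L * x) * L) = L * η := by ring
      rw [this]
      nlinarith [mul_pos hr hη0, mul_pos hρ hη0, sq_nonneg η]
    · intro x hx
      have := (hgderI x hx).neg
      exact this.congr_deriv (neg_neg _)
    · rw [Pi.neg_apply, hg0]; simp; positivity
  -- pass to the limit δ → 0
  have keyU : ∀ s ∈ Icc (0:ℝ) T, g s ≤ 1 - 2*ρ := by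
    intro s hs
    refine le_of_forall_pos_le_add ?_
    intro ε hε
    set δ : ℝ := min (Real.exp (-(L*T))) (ε * Real.exp (-(L*T))) with hδdef
    have hδ0 : 0 < δ := lt_min (Real.exp_pos _) (by positivity)
    have h1 := upper δ hδ0 (min_le_left _ _) s hs
    have h2 : δ * Real.exp (L * s) ≤ ε := by
      calc δ * Real.exp (L * s) ≤ (ε * Real.exp (-(L*T))) * Real.exp (L * T) := by
            apply mul_le_mul (min_le_right _ _) (Real.exp_le_exp.2 (by nlinarith [hs.2, hL0]))
              (Real.exp_nonneg _) (by positivity)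
        _ = ε := by rw [mul_assoc, ← Real.exp_add]; simp
    linarith
  have keyL : ∀ s ∈ Icc (0:ℝ) T, 0 ≤ g s := by
    intro s hs
    have : -(g s) ≤ 0 := by
      refine le_of_forall_pos_le_add ?_
      intro ε hε
      set δ : ℝ := min (Real.exp (-(L*T))) (ε * Real.exp (-(L*T))) with hδdef
      have hδ0 : 0 < δ := lt_min (Real.exp_pos _) (by positivity)
      have h1 := lower δ hδ0 (min_le_left _ _) s hs
      have h2 : δ * Real.exp (L * s) ≤ ε := by
        calc δ * Real.exp (L * s) ≤ (ε * Real.exp (-(L*T))) * Real.exp (L * T) := by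
              apply mul_le_mul (min_le_right _ _) (Real.exp_le_exp.2 (by nlinarith [hs.2, hL0]))
                (Real.exp_nonneg _) (by positivity)
          _ = ε := by rw [mul_assoc, ← Real.exp_add]; simp
      linarith
    linarith
  intro t ht
  have hts : T - t ∈ Icc (0:ℝ) T := hmap t ht
  have : g (T - t) = w t := by simp [hg]
  constructor
  · have := keyL (T - t) hts; rw [‹g (T - t) = w t›] at this; exact this
  · have := keyU (T - t) hts; rw [‹g (T - t) = w t›] at this; exact this



/-- For the solution of the `ε = 0` system, the intensities `λ_k⁰(t) = ½(1 − ΔV_k⁰(t))`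
satisfy `ρ ≤ λ_k⁰(t) ≤ ½` on `[0, T]`, where `ρ = √(r² + r) − r > 0`; in particular they are
bounded below away from `0` uniformly in `k` and `t`. -/
theorem lambda_bounds_of_no_interaction
    (K : ℕ) (hK : 1 ≤ K) (T r : ℝ) (hT : 0 < T) (hr : 0 < r)
    (M : ℕ → ℝ) (hM : ∀ k, k ≤ K → 0 ≤ M k)
    (hMsum : ∑ k ∈ Finset.Icc 0 K, M k = 1)
    (V m : ℕ → ℝ → ℝ) (hsol : IsHJBKolSolution K T r 0 M V m) :
    (∀ k, 1 ≤ k → k ≤ K → ∀ t ∈ Set.Icc (0 : ℝ) T,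
      Real.sqrt (r ^ 2 + r) - r ≤ marketLam K 0 V m k t ∧ marketLam K 0 V m k t ≤ 1 / 2) ∧
    0 < Real.sqrt (r ^ 2 + r) - r := by
  obtain ⟨hV0, hVC1, -, hHJB, -, -, -, hVT, -⟩ := hsol
  set ρ : ℝ := Real.sqrt (r ^ 2 + r) - r with hρdef
  have hs2 : Real.sqrt (r ^ 2 + r) ^ 2 = r ^ 2 + r := Real.sq_sqrt (by positivity)
  have hsnn : 0 ≤ Real.sqrt (r ^ 2 + r) := Real.sqrt_nonneg _
  have hρpos : 0 < ρ := by rw [hρdef]; nlinarith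
  have hρhalf : ρ ≤ 1 / 2 := by rw [hρdef]; nlinarith
  have hρr : r * (1 - 2 * ρ) = ρ ^ 2 := by rw [hρdef]; nlinarith
  -- derivative of each V k from the HJB equation
  have hDV : ∀ k, 1 ≤ k → k ≤ K → ∀ t ∈ Set.Icc (0:ℝ) T,
      HasDerivWithinAt (V k)
        (r * V k t - (1/4) * (1 - (V k t - V (k-1) t))^2) (Set.Icc 0 T) t := by
    intro k h1 h2 t ht
    have hd := ((hVC1 k h1 h2).differentiableOn one_ne_zero t ht).hasDerivWithinAt
    have heq := hHJB k h1 h2 t ht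
    rw [zero_mul, add_zero] at heq
    have h' : derivWithin (V k) (Set.Icc 0 T) t
        = r * V k t - (1/4) * (1 - (V k t - V (k-1) t))^2 := by linarith
    rwa [h'] at hd
  have main : ∀ k, 1 ≤ k → k ≤ K → ∀ t ∈ Set.Icc (0:ℝ) T,
      0 ≤ V k t - V (k-1) t ∧ V k t - V (k-1) t ≤ 1 - 2 * ρ := by
    intro k
    induction k with
    | zero => intro h; exact absurd h (by omega)
    | succ n ih =>
      intro h1 hK'
      rcases Nat.eq_zero_or_pos n with hn | hn1
      · subst hn
        apply ode_invariant hr hρpos hρhalf hρr _ (fun _ => (0:ℝ))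
        · intro t ht
          have hA := hDV 1 le_rfl hK' t ht
          have hB : HasDerivWithinAt (V 0) 0 (Set.Icc 0 T) t := by
            have hfun : V 0 = fun _ => (0:ℝ) := funext hV0
            rw [hfun]; exact hasDerivWithinAt_const t _ 0
          have h := hA.sub hB
          refine h.congr_deriv ?_
          simp [hV0 t]
        · intro t _; exact le_refl 0
        · intro t _; norm_num
        · rw [hVT 1 le_rfl hK', hV0 T]; ring
      · have IH := ih hn1 (by omega)
        apply ode_invariant hr hρpos hρhalf hρr _
          (fun t => (1/4) * (1 - (V n t - V (n-1) t))^2)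
        · intro t ht
          have hA := hDV (n+1) (by omega) hK' t ht
          have hB := hDV n hn1 (by omega) t ht
          simp only [Nat.add_sub_cancel] at hA ⊢
          have h := hA.sub hB
          refine h.congr_deriv ?_
          ring
        · intro t ht; positivity
        · intro t ht
          obtain ⟨hw0, hw1⟩ := IH t ht
          nlinarith
        · simp only [Nat.add_sub_cancel]
          rw [hVT (n+1) (by omega) hK', hVT n hn1 (by omega)]; ring
  refine ⟨?_, hρpos⟩
  intro k h1 h2 t ht
  obtain ⟨hw0, hw1⟩ := main k h1 h2 t ht
  have hlam : marketLam K 0 V m k t = (1/2) * (1 - (V k t - V (k-1) t)) := by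
    simp [marketLam]
  rw [hlam]
  constructor
  · rw [hρdef] at hw1 ⊢; linarith
  · linarith
end
end

section
/- Let β̃, γ̃ : [0,T] → ℝ be continuous and nonnegative, and let z̃ : [0,T] → ℝ be a differentiable function with z̃(t) > 0 for all t ∈ [0,T], satisfying z̃'(t) − β̃(t)·z̃(t)² + γ̃(t) = 0 on [0,T]. Then for every t ∈ [0,T]: z̃(t) ≤ z̃(T) + ∫₀ᵀ γ̃(s) ds, and z̃(t) ≥ (1/z̃(T) + ∫₀ᵀ β̃(s) ds)⁻¹. In particular z̃ is bounded above and bounded below away from 0 on [0,T] by constants depending only on z̃(T), ∫₀ᵀ γ̃, and ∫₀ᵀ β̃. -/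
open Set intervalIntegral

/-- Helper: if `f` has derivative `f'` on `[0,T]` with `f'` continuous and `-g ≤ f'`
for a continuous nonnegative `g`, then `f t ≤ f T + ∫₀ᵀ g` for `t ∈ [0,T]`. -/
lemma riccati_key (T t : ℝ) (ht : t ∈ Set.Icc (0:ℝ) T) (f f' g : ℝ → ℝ)
    (hf : ∀ s ∈ Set.Icc (0:ℝ) T, HasDerivWithinAt f (f' s) (Set.Icc 0 T) s)
    (hf'c : ContinuousOn f' (Set.Icc 0 T))
    (hgc : ContinuousOn g (Set.Icc 0 T))
    (hg0 : ∀ s ∈ Set.Icc (0:ℝ) T, 0 ≤ g s)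
    (hle : ∀ s ∈ Set.Icc (0:ℝ) T, -g s ≤ f' s) :
    f t ≤ f T + ∫ s in (0:ℝ)..T, g s := by
  obtain ⟨h0t, htT⟩ := ht
  have hsub : Set.Icc t T ⊆ Set.Icc (0:ℝ) T := Set.Icc_subset_Icc h0t le_rfl
  have hsub0 : Set.Icc (0:ℝ) t ⊆ Set.Icc (0:ℝ) T := Set.Icc_subset_Icc le_rfl htT
  have hfc : ContinuousOn f (Set.Icc 0 T) := fun s hs => (hf s hs).continuousWithinAt
  -- FTC on [t, T]
  have hftc : ∫ s in t..T, f' s = f T - f t := by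
    apply intervalIntegral.integral_eq_sub_of_hasDeriv_right_of_le htT
      (hfc.mono hsub)
    · intro x hx
      have hx' : x ∈ Set.Ioo (0:ℝ) T :=
        ⟨lt_of_le_of_lt h0t hx.1, hx.2⟩
      have : HasDerivAt f (f' x) x :=
        (hf x (Set.Ioo_subset_Icc_self hx')).hasDerivAt
          (Icc_mem_nhds hx'.1 hx'.2)
      exact this.hasDerivWithinAt
    · exact ((hf'c.mono hsub).intervalIntegrable_of_Icc htT)
  -- comparison: -∫ₜᵀ g ≤ ∫ₜᵀ f'
  have hcomp : (∫ s in t..T, -g s) ≤ ∫ s in t..T, f' s := by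
    apply intervalIntegral.integral_mono_on htT
      (((hgc.mono hsub).neg).intervalIntegrable_of_Icc htT)
      ((hf'c.mono hsub).intervalIntegrable_of_Icc htT)
    intro s hs
    exact hle s (hsub hs)
  have hnegint : (∫ s in t..T, -g s) = -∫ s in t..T, g s :=
    intervalIntegral.integral_neg
  -- ∫ₜᵀ g ≤ ∫₀ᵀ g
  have hsplit : (∫ s in (0:ℝ)..t, g s) + ∫ s in t..T, g s = ∫ s in (0:ℝ)..T, g s :=
    intervalIntegral.integral_add_adjacent_intervals
      ((hgc.mono hsub0).intervalIntegrable_of_Icc h0t)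
      ((hgc.mono hsub).intervalIntegrable_of_Icc htT)
  have h0tg : 0 ≤ ∫ s in (0:ℝ)..t, g s :=
    intervalIntegral.integral_nonneg h0t (fun s hs => hg0 s (hsub0 hs))
  linarith [hcomp, hftc, hnegint ▸ hcomp]
/-- A positive solution of `z̃' − β̃ z̃² + γ̃ = 0` on `[0, T]`, with `β̃, γ̃` continuous and
nonnegative, satisfies `z̃(t) ≤ z̃(T) + ∫₀ᵀ γ̃` and `z̃(t) ≥ (1/z̃(T) + ∫₀ᵀ β̃)⁻¹` on `[0, T]`;
in particular it is bounded above and bounded below away from `0`. -/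
theorem riccati_solution_bounds (T : ℝ) (hT : 0 < T)
    (β γ : ℝ → ℝ)
    (hβc : ContinuousOn β (Set.Icc 0 T)) (hγc : ContinuousOn γ (Set.Icc 0 T))
    (hβ0 : ∀ t ∈ Set.Icc (0 : ℝ) T, 0 ≤ β t) (hγ0 : ∀ t ∈ Set.Icc (0 : ℝ) T, 0 ≤ γ t)
    (z z' : ℝ → ℝ)
    (hz : ∀ t ∈ Set.Icc (0 : ℝ) T, HasDerivWithinAt z (z' t) (Set.Icc 0 T) t)
    (hzpos : ∀ t ∈ Set.Icc (0 : ℝ) T, 0 < z t)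
    (hode : ∀ t ∈ Set.Icc (0 : ℝ) T, z' t - β t * z t ^ 2 + γ t = 0) :
    ∀ t ∈ Set.Icc (0 : ℝ) T,
      z t ≤ z T + (∫ s in (0:ℝ)..T, γ s) ∧
      (1 / z T + (∫ s in (0:ℝ)..T, β s))⁻¹ ≤ z t := by
  have hzc : ContinuousOn z (Set.Icc 0 T) := fun s hs => (hz s hs).continuousWithinAt
  have hz'eq : ∀ s ∈ Set.Icc (0:ℝ) T, z' s = β s * z s ^ 2 - γ s := by
    intro s hs; have := hode s hs; linarith
  have hz'c : ContinuousOn z' (Set.Icc 0 T) := by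
    apply ContinuousOn.congr (f := fun s => β s * z s ^ 2 - γ s)
    · exact (hβc.mul (hzc.pow 2)).sub hγc
    · exact hz'eq
  have hTmem : T ∈ Set.Icc (0:ℝ) T := ⟨le_of_lt hT, le_rfl⟩
  intro t ht
  constructor
  · -- upper bound: z' ≥ -γ
    exact riccati_key T t ht z z' γ hz hz'c hγc hγ0
      (fun s hs => by
        have h1 := hz'eq s hs
        have h2 := hβ0 s hs
        have h3 := hzpos s hs
        nlinarith [sq_nonneg (z s)])
  · -- lower bound: consider w = z⁻¹
    set w' : ℝ → ℝ := fun s => -z' s / z s ^ 2 with hw'def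
    have hw : ∀ s ∈ Set.Icc (0:ℝ) T, HasDerivWithinAt (fun u => (z u)⁻¹) (w' s) (Set.Icc 0 T) s :=
      fun s hs => (hz s hs).inv (ne_of_gt (hzpos s hs))
    have hw'c : ContinuousOn w' (Set.Icc 0 T) :=
      (hz'c.neg).div (hzc.pow 2) (fun s hs => pow_ne_zero 2 (ne_of_gt (hzpos s hs)))
    have hwle : (fun u => (z u)⁻¹) t ≤ (fun u => (z u)⁻¹) T + ∫ s in (0:ℝ)..T, β s := by
      apply riccati_key T t ht _ w' β hw hw'c hβc hβ0
      intro s hs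
      have h1 := hz'eq s hs
      have h2 := hγ0 s hs
      have h3 := hzpos s hs
      have h4 : (0:ℝ) < z s ^ 2 := by positivity
      rw [hw'def]
      simp only
      rw [h1, neg_sub, sub_div]
      have hc : β s * z s ^ 2 / z s ^ 2 = β s := by field_simp
      have hd : 0 ≤ γ s / z s ^ 2 := div_nonneg h2 h4.le
      rw [hc]; linarith
    have h1 : (0:ℝ) < (z t)⁻¹ := inv_pos.mpr (hzpos t ht)
    have h2 : (z t)⁻¹ ≤ 1 / z T + ∫ s in (0:ℝ)..T, β s := by
      simpa [one_div] using hwle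
    calc (1 / z T + ∫ s in (0:ℝ)..T, β s)⁻¹ ≤ ((z t)⁻¹)⁻¹ := inv_anti₀ h1 h2
      _ = z t := inv_inv _
end

section
/- Let (V^{[1]}, m^{[1]}) and (V^{[2]}, m^{[2]}) be two solutions of the HJB–Kolmogorov system with the same data K, T, r, ε, M. For i = 1, 2 and k = 1,…,K define G^{[i]}_k := ½(1 − ΔV^{[i]}_k + ε·φ^{[i]}) and H^{[i]}_k := (G^{[i]}_k)², where φ^{[i]} := (Σ_{j=1}^K m^{[i]}_j·ΔV^{[i]}_j − η^{[i]})/(2 + ε·η^{[i]}) and η^{[i]} := Σ_{j=1}^K m^{[i]}_j; set G^{[i]}_{K+1} := 0, and write δL := L^{[2]} − L^{[1]} for any quantity L. Then the energy identity ∫₀ᵀ e^{−rt} Σ_{k=1}^K [ δm_k(t)·δH_k(t) + δ(ΔV_k)(t)·δ(G_k·m_k)(t) ] dt = 0 holds. -/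
noncomputable section

namespace EnergyAux

lemma telescope (K : ℕ) (w q : ℕ → ℝ) :
    ∑ k ∈ Finset.Icc 1 K, (w k * q (k + 1) - w (k - 1) * q k)
      = w K * q (K + 1) - w 0 * q 1 := by
  induction K with
  | zero => simp
  | succ n ih =>
      rw [Finset.sum_Icc_succ_top (by omega : 1 ≤ n + 1), ih]
      simp only [Nat.add_sub_cancel]
      ring

lemma abel (K : ℕ) (w q : ℕ → ℝ) (hw0 : w 0 = 0) (hq : q (K + 1) = 0) :
    ∑ k ∈ Finset.Icc 1 K, w k * (q (k + 1) - q k)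
      = -∑ k ∈ Finset.Icc 1 K, (w k - w (k - 1)) * q k := by
  have h := telescope K w q
  rw [hw0, hq] at h
  have h2 : ∑ k ∈ Finset.Icc 1 K, (w k * (q (k + 1) - q k) + (w k - w (k - 1)) * q k)
      = ∑ k ∈ Finset.Icc 1 K, (w k * q (k + 1) - w (k - 1) * q k) :=
    Finset.sum_congr rfl fun k _ => by ring
  rw [Finset.sum_add_distrib] at h2
  simp only [mul_zero, zero_mul, sub_zero] at h
  linarith

lemma cd_hasDerivAt {f : ℝ → ℝ} {T : ℝ} (hf : ContDiffOn ℝ 1 f (Set.Icc 0 T))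
    {t : ℝ} (ht : t ∈ Set.Ioo (0:ℝ) T) :
    HasDerivAt f (derivWithin f (Set.Icc 0 T) t) t := by
  have h1 := (hf.differentiableOn one_ne_zero) t (Set.mem_Icc_of_Ioo ht)
  exact h1.hasDerivWithinAt.hasDerivAt (Icc_mem_nhds ht.1 ht.2)

lemma lam_sq_eq {K : ℕ} {T r ε : ℝ} {V m : ℕ → ℝ → ℝ}
    (hhjb : ∀ k, 1 ≤ k → k ≤ K → ∀ t ∈ Set.Icc (0 : ℝ) T,
      derivWithin (V k) (Set.Icc 0 T) t - r * V k t +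
        (1 / 4) * (1 - (V k t - V (k - 1) t) + ε * marketPhi K ε V m t) ^ 2 = 0)
    {k : ℕ} (hk1 : 1 ≤ k) (hkK : k ≤ K) {t : ℝ} (ht : t ∈ Set.Icc (0:ℝ) T) :
    marketLam K ε V m k t ^ 2 = r * V k t - derivWithin (V k) (Set.Icc 0 T) t := by
  have h := hhjb k hk1 hkK t ht
  have h2 : marketLam K ε V m k t ^ 2
      = (1/4) * (1 - (V k t - V (k - 1) t) + ε * marketPhi K ε V m t) ^ 2 := by
    unfold marketLam; ring
  rw [h2]; linarith

lemma lam_mul_eq {K : ℕ} {T ε : ℝ} {V m : ℕ → ℝ → ℝ}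
    (hm0 : ∀ t ∈ Set.Icc (0 : ℝ) T,
      derivWithin (m 0) (Set.Icc 0 T) t = marketLam K ε V m 1 t * m 1 t)
    (hmk : ∀ k, 1 ≤ k → k ≤ K - 1 → ∀ t ∈ Set.Icc (0 : ℝ) T,
      derivWithin (m k) (Set.Icc 0 T) t =
        marketLam K ε V m (k + 1) t * m (k + 1) t - marketLam K ε V m k t * m k t)
    {k : ℕ} (hk1 : 1 ≤ k) (hkK : k ≤ K) {t : ℝ} (ht : t ∈ Set.Icc (0:ℝ) T) :
    marketLam K ε V m k t * m k t
      = ∑ j ∈ Finset.range k, derivWithin (m j) (Set.Icc 0 T) t := by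
  induction k with
  | zero => omega
  | succ n ih =>
      rcases Nat.eq_zero_or_pos n with h0 | hpos
      · subst h0
        simp only [zero_add, Finset.range_one, Finset.sum_singleton]
        exact (hm0 t ht).symm
      · have hn : n ≤ K - 1 := by omega
        have hstep := hmk n hpos hn t ht
        rw [Finset.sum_range_succ, ← ih hpos (by omega), hstep]
        ring

lemma m_deriv_eq {K : ℕ} {T ε : ℝ} {V m : ℕ → ℝ → ℝ}
    (hmk : ∀ k, 1 ≤ k → k ≤ K - 1 → ∀ t ∈ Set.Icc (0 : ℝ) T,
      derivWithin (m k) (Set.Icc 0 T) t =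
        marketLam K ε V m (k + 1) t * m (k + 1) t - marketLam K ε V m k t * m k t)
    (hmK : ∀ t ∈ Set.Icc (0 : ℝ) T,
      derivWithin (m K) (Set.Icc 0 T) t = -(marketLam K ε V m K t) * m K t)
    {k : ℕ} (hk1 : 1 ≤ k) (hkK : k ≤ K) {t : ℝ} (ht : t ∈ Set.Icc (0:ℝ) T) :
    derivWithin (m k) (Set.Icc 0 T) t
      = (if k + 1 ≤ K then marketLam K ε V m (k + 1) t * m (k + 1) t else 0)
        - marketLam K ε V m k t * m k t := by
  rcases eq_or_lt_of_le hkK with rfl | hlt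
  · rw [if_neg (by omega), hmK t ht]; ring
  · rw [if_pos (by omega)]
    exact hmk k hk1 (by omega) t ht

end EnergyAux

open EnergyAux

/-- **Energy identity.** For two solutions of the HJB–Kolmogorov system with the same data,
writing `G_k = ½(1 − ΔV_k + εφ)`, `H_k = G_k²` and `δL = L⁽²⁾ − L⁽¹⁾`, one has
`∫₀ᵀ e^{−rt} ∑_{k=1}^K [δm_k·δH_k + δ(ΔV_k)·δ(G_k m_k)] dt = 0`. -/
theorem energy_identity
    (K : ℕ) (hK : 1 ≤ K) (T r ε : ℝ) (hT : 0 < T) (hr : 0 < r) (hε : 0 ≤ ε)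
    (M : ℕ → ℝ) (hM : ∀ k, k ≤ K → 0 ≤ M k)
    (hMsum : ∑ k ∈ Finset.Icc 0 K, M k = 1)
    (V₁ m₁ V₂ m₂ : ℕ → ℝ → ℝ)
    (h1 : IsHJBKolSolution K T r ε M V₁ m₁)
    (h2 : IsHJBKolSolution K T r ε M V₂ m₂) :
    ∫ t in (0:ℝ)..T, Real.exp (-(r * t)) *
      ∑ k ∈ Finset.Icc 1 K,
        ((m₂ k t - m₁ k t) *
            ((marketLam K ε V₂ m₂ k t) ^ 2 - (marketLam K ε V₁ m₁ k t) ^ 2) +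
          ((V₂ k t - V₂ (k - 1) t) - (V₁ k t - V₁ (k - 1) t)) *
            (marketLam K ε V₂ m₂ k t * m₂ k t - marketLam K ε V₁ m₁ k t * m₁ k t)) = 0 := by
  classical
  obtain ⟨hV0₁, hVc₁, hmc₁, hhjb₁, hm0₁, hmk₁, hmK₁, hVT₁, hmi₁⟩ := h1
  obtain ⟨hV0₂, hVc₂, hmc₂, hhjb₂, hm0₂, hmk₂, hmK₂, hVT₂, hmi₂⟩ := h2
  have hle : (0:ℝ) ≤ T := hT.le
  have hud : UniqueDiffOn ℝ (Set.Icc (0:ℝ) T) := uniqueDiffOn_Icc hT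
  set g : ℝ → ℝ := fun t => Real.exp (-(r * t)) *
      ∑ k ∈ Finset.Icc 1 K,
        ((m₂ k t - m₁ k t) *
            ((marketLam K ε V₂ m₂ k t) ^ 2 - (marketLam K ε V₁ m₁ k t) ^ 2) +
          ((V₂ k t - V₂ (k - 1) t) - (V₁ k t - V₁ (k - 1) t)) *
            (marketLam K ε V₂ m₂ k t * m₂ k t - marketLam K ε V₁ m₁ k t * m₁ k t))
    with hgdef
  set F : ℝ → ℝ := fun t => Real.exp (-(r * t)) *
      ∑ k ∈ Finset.Icc 1 K, (V₂ k t - V₁ k t) * (m₂ k t - m₁ k t) with hFdef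
  have hexp : Continuous fun t : ℝ => Real.exp (-(r * t)) := by fun_prop
  -- continuity of F
  have hFcont : ContinuousOn F (Set.Icc (0:ℝ) T) := by
    rw [hFdef]
    apply ContinuousOn.mul hexp.continuousOn
    apply continuousOn_finset_sum
    intro k hk
    obtain ⟨hk1, hkK⟩ := Finset.mem_Icc.mp hk
    exact ((hVc₂ k hk1 hkK).continuousOn.sub (hVc₁ k hk1 hkK).continuousOn).mul
      ((hmc₂ k hkK).continuousOn.sub (hmc₁ k hkK).continuousOn)
  -- continuity of g
  have hgcont : ContinuousOn g (Set.Icc (0:ℝ) T) := by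
    have hψ : ContinuousOn (fun t => Real.exp (-(r * t)) *
        ∑ k ∈ Finset.Icc 1 K,
          ((m₂ k t - m₁ k t) *
              ((r * V₂ k t - derivWithin (V₂ k) (Set.Icc 0 T) t)
                - (r * V₁ k t - derivWithin (V₁ k) (Set.Icc 0 T) t)) +
            ((V₂ k t - V₂ (k - 1) t) - (V₁ k t - V₁ (k - 1) t)) *
              ((∑ j ∈ Finset.range k, derivWithin (m₂ j) (Set.Icc 0 T) t)
                - ∑ j ∈ Finset.range k, derivWithin (m₁ j) (Set.Icc 0 T) t)))
        (Set.Icc (0:ℝ) T) := by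
      apply ContinuousOn.mul hexp.continuousOn
      apply continuousOn_finset_sum
      intro k hk
      obtain ⟨hk1, hkK⟩ := Finset.mem_Icc.mp hk
      have cV₂ : ∀ j, j ≤ K → ContinuousOn (V₂ j) (Set.Icc (0:ℝ) T) := by
        intro j hj
        rcases Nat.eq_zero_or_pos j with rfl | hpos
        · exact continuousOn_const.congr fun x _ => hV0₂ x
        · exact (hVc₂ j hpos hj).continuousOn
      have cV₁ : ∀ j, j ≤ K → ContinuousOn (V₁ j) (Set.Icc (0:ℝ) T) := by
        intro j hj
        rcases Nat.eq_zero_or_pos j with rfl | hpos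
        · exact continuousOn_const.congr fun x _ => hV0₁ x
        · exact (hVc₁ j hpos hj).continuousOn
      have c2 : ContinuousOn
          (fun t => r * V₂ k t - derivWithin (V₂ k) (Set.Icc 0 T) t) (Set.Icc (0:ℝ) T) :=
        (continuousOn_const.mul (hVc₂ k hk1 hkK).continuousOn).sub
          ((hVc₂ k hk1 hkK).continuousOn_derivWithin hud le_rfl)
      have c1 : ContinuousOn
          (fun t => r * V₁ k t - derivWithin (V₁ k) (Set.Icc 0 T) t) (Set.Icc (0:ℝ) T) :=
        (continuousOn_const.mul (hVc₁ k hk1 hkK).continuousOn).sub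
          ((hVc₁ k hk1 hkK).continuousOn_derivWithin hud le_rfl)
      have d2 : ContinuousOn
          (fun t => ∑ j ∈ Finset.range k, derivWithin (m₂ j) (Set.Icc 0 T) t)
          (Set.Icc (0:ℝ) T) := by
        apply continuousOn_finset_sum
        intro j hj
        have : j ≤ K := le_trans (le_of_lt (Finset.mem_range.mp hj)) hkK
        exact (hmc₂ j this).continuousOn_derivWithin hud le_rfl
      have d1 : ContinuousOn
          (fun t => ∑ j ∈ Finset.range k, derivWithin (m₁ j) (Set.Icc 0 T) t)
          (Set.Icc (0:ℝ) T) := by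
        apply continuousOn_finset_sum
        intro j hj
        have : j ≤ K := le_trans (le_of_lt (Finset.mem_range.mp hj)) hkK
        exact (hmc₁ j this).continuousOn_derivWithin hud le_rfl
      exact (((hmc₂ k hkK).continuousOn.sub (hmc₁ k hkK).continuousOn).mul (c2.sub c1)).add
        ((((cV₂ k hkK).sub (cV₂ (k-1) (by omega))).sub
          ((cV₁ k hkK).sub (cV₁ (k-1) (by omega)))).mul (d2.sub d1))
    apply hψ.congr
    intro t ht
    simp only [hgdef]
    congr 1
    apply Finset.sum_congr rfl
    intro k hk
    obtain ⟨hk1, hkK⟩ := Finset.mem_Icc.mp hk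
    rw [lam_sq_eq hhjb₂ hk1 hkK ht, lam_sq_eq hhjb₁ hk1 hkK ht,
      lam_mul_eq hm0₂ hmk₂ hk1 hkK ht, lam_mul_eq hm0₁ hmk₁ hk1 hkK ht]
  -- endpoint values
  have hFT : F T = 0 := by
    simp only [hFdef]
    have h0 : ∑ k ∈ Finset.Icc 1 K, (V₂ k T - V₁ k T) * (m₂ k T - m₁ k T) = 0 :=
      Finset.sum_eq_zero fun k hk => by
        obtain ⟨hk1, hkK⟩ := Finset.mem_Icc.mp hk
        rw [hVT₂ k hk1 hkK, hVT₁ k hk1 hkK]; ring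
    rw [h0, mul_zero]
  have hF0 : F 0 = 0 := by
    simp only [hFdef]
    have h0 : ∑ k ∈ Finset.Icc 1 K, (V₂ k 0 - V₁ k 0) * (m₂ k 0 - m₁ k 0) = 0 :=
      Finset.sum_eq_zero fun k hk => by
        obtain ⟨hk1, hkK⟩ := Finset.mem_Icc.mp hk
        rw [hmi₂ k hkK, hmi₁ k hkK]; ring
    rw [h0, mul_zero]
  -- derivative of F
  have hFd : ∀ t ∈ Set.Ioo (0:ℝ) T, HasDerivAt F (-(g t)) t := by
    intro t ht
    have htI : t ∈ Set.Icc (0:ℝ) T := Set.mem_Icc_of_Ioo ht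
    have hE : HasDerivAt (fun u : ℝ => Real.exp (-(r * u))) (Real.exp (-(r * t)) * (-r)) t := by
      have h1 : HasDerivAt (fun u : ℝ => -(r * u)) (-r) t := by
        simpa using ((hasDerivAt_id t).const_mul r).fun_neg
      exact h1.exp
    have hS : HasDerivAt
        (fun u : ℝ => ∑ k ∈ Finset.Icc 1 K, (V₂ k u - V₁ k u) * (m₂ k u - m₁ k u))
        (∑ k ∈ Finset.Icc 1 K,
          ((derivWithin (V₂ k) (Set.Icc 0 T) t - derivWithin (V₁ k) (Set.Icc 0 T) t)
              * (m₂ k t - m₁ k t)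
            + (V₂ k t - V₁ k t)
              * (derivWithin (m₂ k) (Set.Icc 0 T) t - derivWithin (m₁ k) (Set.Icc 0 T) t))) t := by
      apply HasDerivAt.fun_sum
      intro k hk
      obtain ⟨hk1, hkK⟩ := Finset.mem_Icc.mp hk
      exact ((cd_hasDerivAt (hVc₂ k hk1 hkK) ht).sub (cd_hasDerivAt (hVc₁ k hk1 hkK) ht)).mul
        ((cd_hasDerivAt (hmc₂ k hkK) ht).sub (cd_hasDerivAt (hmc₁ k hkK) ht))
    have hmul : HasDerivAt
        (fun u : ℝ => Real.exp (-(r * u)) *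
          ∑ k ∈ Finset.Icc 1 K, (V₂ k u - V₁ k u) * (m₂ k u - m₁ k u))
        (Real.exp (-(r * t)) * (-r) *
            (∑ k ∈ Finset.Icc 1 K, (V₂ k t - V₁ k t) * (m₂ k t - m₁ k t))
          + Real.exp (-(r * t)) *
            (∑ k ∈ Finset.Icc 1 K,
              ((derivWithin (V₂ k) (Set.Icc 0 T) t - derivWithin (V₁ k) (Set.Icc 0 T) t)
                  * (m₂ k t - m₁ k t)
                + (V₂ k t - V₁ k t)
                  * (derivWithin (m₂ k) (Set.Icc 0 T) t - derivWithin (m₁ k) (Set.Icc 0 T) t)))) t :=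
      hE.mul hS
    -- the Q function at this time t
    set Q : ℕ → ℝ := fun j =>
      (if j ≤ K then marketLam K ε V₂ m₂ j t * m₂ j t else 0)
        - (if j ≤ K then marketLam K ε V₁ m₁ j t * m₁ j t else 0) with hQdef
    have hsum : ∑ k ∈ Finset.Icc 1 K,
        ((derivWithin (V₂ k) (Set.Icc 0 T) t - derivWithin (V₁ k) (Set.Icc 0 T) t)
            * (m₂ k t - m₁ k t)
          + (V₂ k t - V₁ k t)
            * (derivWithin (m₂ k) (Set.Icc 0 T) t - derivWithin (m₁ k) (Set.Icc 0 T) t))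
      = ∑ k ∈ Finset.Icc 1 K,
        (((r * V₂ k t - marketLam K ε V₂ m₂ k t ^ 2)
            - (r * V₁ k t - marketLam K ε V₁ m₁ k t ^ 2)) * (m₂ k t - m₁ k t)
          + (V₂ k t - V₁ k t) * (Q (k + 1) - Q k)) := by
      apply Finset.sum_congr rfl
      intro k hk
      obtain ⟨hk1, hkK⟩ := Finset.mem_Icc.mp hk
      have a2 := lam_sq_eq hhjb₂ hk1 hkK htI
      have a1 := lam_sq_eq hhjb₁ hk1 hkK htI
      have b2 := m_deriv_eq hmk₂ hmK₂ hk1 hkK htI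
      have b1 := m_deriv_eq hmk₁ hmK₁ hk1 hkK htI
      have a2' : derivWithin (V₂ k) (Set.Icc 0 T) t
          = r * V₂ k t - marketLam K ε V₂ m₂ k t ^ 2 := by linarith
      have a1' : derivWithin (V₁ k) (Set.Icc 0 T) t
          = r * V₁ k t - marketLam K ε V₁ m₁ k t ^ 2 := by linarith
      rw [a2', a1', b2, b1]
      simp only [hQdef]
      simp only [if_pos hkK]
      ring
    have hQtop : Q (K + 1) = 0 := by
      simp only [hQdef]
      simp only [if_neg (show ¬ (K + 1 ≤ K) by omega)]
      ring
    have hw0 : V₂ 0 t - V₁ 0 t = 0 := by rw [hV0₂ t, hV0₁ t]; ring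
    have habel : ∑ k ∈ Finset.Icc 1 K, (V₂ k t - V₁ k t) * (Q (k + 1) - Q k)
        = -∑ k ∈ Finset.Icc 1 K,
            ((V₂ k t - V₁ k t) - (V₂ (k - 1) t - V₁ (k - 1) t)) * Q k :=
      abel K (fun k => V₂ k t - V₁ k t) Q hw0 hQtop
    have hE0 : (∑ k ∈ Finset.Icc 1 K, (m₂ k t - m₁ k t) *
            ((marketLam K ε V₂ m₂ k t) ^ 2 - (marketLam K ε V₁ m₁ k t) ^ 2))
        + (∑ k ∈ Finset.Icc 1 K, ((V₂ k t - V₂ (k - 1) t) - (V₁ k t - V₁ (k - 1) t)) *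
            (marketLam K ε V₂ m₂ k t * m₂ k t - marketLam K ε V₁ m₁ k t * m₁ k t))
        + (∑ k ∈ Finset.Icc 1 K, ((r * V₂ k t - marketLam K ε V₂ m₂ k t ^ 2)
            - (r * V₁ k t - marketLam K ε V₁ m₁ k t ^ 2)) * (m₂ k t - m₁ k t))
        - (∑ k ∈ Finset.Icc 1 K,
            ((V₂ k t - V₁ k t) - (V₂ (k - 1) t - V₁ (k - 1) t)) * Q k)
        - r * (∑ k ∈ Finset.Icc 1 K, (V₂ k t - V₁ k t) * (m₂ k t - m₁ k t)) = 0 := by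
      rw [← Finset.sum_add_distrib, ← Finset.sum_add_distrib, ← Finset.sum_sub_distrib,
        Finset.mul_sum, ← Finset.sum_sub_distrib]
      apply Finset.sum_eq_zero
      intro k hk
      obtain ⟨hk1, hkK⟩ := Finset.mem_Icc.mp hk
      simp only [hQdef]
      simp only [if_pos hkK]
      ring
    have hval : Real.exp (-(r * t)) * (-r) *
            (∑ k ∈ Finset.Icc 1 K, (V₂ k t - V₁ k t) * (m₂ k t - m₁ k t))
          + Real.exp (-(r * t)) *
            (∑ k ∈ Finset.Icc 1 K,
              ((derivWithin (V₂ k) (Set.Icc 0 T) t - derivWithin (V₁ k) (Set.Icc 0 T) t)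
                  * (m₂ k t - m₁ k t)
                + (V₂ k t - V₁ k t)
                  * (derivWithin (m₂ k) (Set.Icc 0 T) t - derivWithin (m₁ k) (Set.Icc 0 T) t)))
        = -(g t) := by
      simp only [hgdef]
      rw [hsum, Finset.sum_add_distrib, habel, Finset.sum_add_distrib]
      linear_combination (Real.exp (-(r * t))) * hE0
    rw [hFdef]
    exact hval ▸ hmul
  -- fundamental theorem of calculus
  have hint : IntervalIntegrable (fun u => -(g u)) MeasureTheory.volume 0 T := by
    apply ContinuousOn.intervalIntegrable
    rw [Set.uIcc_of_le hle]
    exact hgcont.neg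
  have hFTC := intervalIntegral.integral_eq_sub_of_hasDeriv_right_of_le hle hFcont
    (fun x hx => (hFd x hx).hasDerivWithinAt) hint
  rw [hFT, hF0, sub_zero, intervalIntegral.integral_neg, neg_eq_zero] at hFTC
  exact hFTC
end
end
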